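/- arXiv:1501.03505 — 6 statements merged into one kernel-verified Lean document; each statement's English description precedes it below -/
import Mathlib

section
/- Let m be an even positive integer and let d = 2^s for some integer s ≥ 1. Consider any deterministic sequential protocol for n parties that solves the sequential n-point modulo-(m,d) problem with certainty. Then the number of stages k ∈ {1,…,n−1} at which the message alphabet M_k satisfies m·|M_k| < d (i.e., the party sends fewer than log₂(d/m) bits) is at most m·d − 1. -/
/-- A deterministic sequential protocol for `n` parties in the sequential `n`-point
modulo-`(m,d)` problem.  Stage `k+1` (1-indexed) receives a message from alphabet `Msg k`
(`Msg 0` being a one-element set), together with its input in `Fin d`, produces an output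
in `Fin m` and sends a message from alphabet `Msg (k+1)` to the following party. -/
structure SeqProtocol (n m d : ℕ) where
  Msg : ℕ → Type
  msgFintype : ∀ k, Fintype (Msg k)
  msgInit : Msg 0
  msgInitSubsingleton : Subsingleton (Msg 0)
  out : (k : ℕ) → Fin d → Msg k → Fin m
  send : (k : ℕ) → Fin d → Msg k → Msg (k + 1)

namespace SeqProtocol

variable {n m d : ℕ}

/-- The message produced after the first `k` stages on input `X` (where `X k` is the
input of the `(k+1)`-st party, 0-indexed). -/
def run (P : SeqProtocol n m d) (X : ℕ → Fin d) : (k : ℕ) → P.Msg k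
  | 0 => P.msgInit
  | k + 1 => P.send k (X k) (P.run X k)

/-- The protocol solves the sequential `n`-point modulo-`(m,d)` problem with certainty:
for every input `X` with `∑ X k ≡ 0 (mod d)`, the outputs `Y` satisfy
`d * ∑ Y k ≡ ∑ X k (mod m·d)`. -/
def Solves (P : SeqProtocol n m d) : Prop :=
  ∀ X : ℕ → Fin d,
    (d : ℤ) ∣ (∑ k ∈ Finset.range n, ((X k : ℕ) : ℤ)) →
    ((d : ℤ) * ∑ k ∈ Finset.range n, ((P.out k (X k) (P.run X k) : ℕ) : ℤ)) ≡
      (∑ k ∈ Finset.range n, ((X k : ℕ) : ℤ)) [ZMOD ((m : ℤ) * d)]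

end SeqProtocol

namespace ModGameAux

open Finset

variable {n m d : ℕ} (P : SeqProtocol n m d)

/-- The integer "defect" after `k` stages. -/
def VI (X : ℕ → Fin d) (k : ℕ) : ℤ :=
  (∑ i ∈ Finset.range k, ((X i : ℕ) : ℤ))
    - (d : ℤ) * ∑ i ∈ Finset.range k, ((P.out i (X i) (P.run X i) : ℕ) : ℤ)

/-- The defect viewed in `ZMod (m*d)`. -/
def V (X : ℕ → Fin d) (k : ℕ) : ZMod (m * d) := ((VI P X k : ℤ) : ZMod (m * d))

def Reach (k : ℕ) (μ : P.Msg k) (v : ZMod (m * d)) : Prop :=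
  ∃ X : ℕ → Fin d, P.run X k = μ ∧ V P X k = v

lemma run_congr {X X' : ℕ → Fin d} {k : ℕ} (h : ∀ i < k, X i = X' i) :
    P.run X k = P.run X' k := by
  induction k with
  | zero => rfl
  | succ k ih =>
    have h1 : ∀ i < k, X i = X' i := fun i hi => h i (Nat.lt_succ_of_lt hi)
    simp only [SeqProtocol.run, h k (Nat.lt_succ_self k), ih h1]

lemma VI_congr {X X' : ℕ → Fin d} {k : ℕ} (h : ∀ i < k, X i = X' i) :
    VI P X k = VI P X' k := by
  unfold VI
  have hs1 : ∀ i ∈ Finset.range k, ((X i : ℕ) : ℤ) = ((X' i : ℕ) : ℤ) := by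
    intro i hi; rw [h i (Finset.mem_range.mp hi)]
  have hs2 : ∀ i ∈ Finset.range k,
      ((P.out i (X i) (P.run X i) : ℕ) : ℤ) = ((P.out i (X' i) (P.run X' i) : ℕ) : ℤ) := by
    intro i hi
    have hi' := Finset.mem_range.mp hi
    rw [h i hi', run_congr P (fun j hj => h j (hj.trans hi'))]
  rw [Finset.sum_congr rfl hs1, Finset.sum_congr rfl hs2]

lemma VI_succ (X : ℕ → Fin d) (k : ℕ) :
    VI P X (k+1) = VI P X k + ((X k : ℕ) : ℤ)
      - (d : ℤ) * ((P.out k (X k) (P.run X k) : ℕ) : ℤ) := by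
  unfold VI
  rw [Finset.sum_range_succ, Finset.sum_range_succ]
  ring

lemma reach_succ {k : ℕ} {μ : P.Msg k} {v : ZMod (m*d)} (h : Reach P k μ v) (x : Fin d) :
    Reach P (k+1) (P.send k x μ)
      (v + ((x : ℕ) : ZMod (m*d)) - (d : ZMod (m*d)) * ((P.out k x μ : ℕ) : ZMod (m*d))) := by
  obtain ⟨X, hrun, hV⟩ := h
  classical
  refine ⟨Function.update X k x, ?_, ?_⟩
  · have hpre : ∀ i < k, X i = Function.update X k x i := by
      intro i hi
      rw [Function.update_of_ne (Nat.ne_of_lt hi)]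
    have hrun' : P.run (Function.update X k x) k = μ := by
      rw [← run_congr P hpre, hrun]
    simp only [SeqProtocol.run, hrun', Function.update_self]
  · have hpre : ∀ i < k, X i = Function.update X k x i := by
      intro i hi
      rw [Function.update_of_ne (Nat.ne_of_lt hi)]
    have hrun' : P.run (Function.update X k x) k = μ := by
      rw [← run_congr P hpre, hrun]
    have hVk : V P (Function.update X k x) k = v := by
      unfold V; rw [← VI_congr P hpre]; exact hV
    unfold V at hVk ⊢
    rw [VI_succ]
    push_cast
    rw [hVk, Function.update_self, hrun']

lemma reach_pad (hd0 : 0 < d) (k j : ℕ) (hkj : k ≤ j) (μ : P.Msg k) :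
    ∃ (μ' : P.Msg j) (c : ZMod (m*d)),
      ∀ v, Reach P k μ v → Reach P j μ' (v + c) := by
  induction j, hkj using Nat.le_induction with
  | base => exact ⟨μ, 0, fun v hv => by simpa using hv⟩
  | succ j hj ih =>
    obtain ⟨μ', c, hc⟩ := ih
    refine ⟨P.send j ⟨0, hd0⟩ μ',
      c + (((⟨0, hd0⟩ : Fin d) : ℕ) : ZMod (m*d))
        - (d : ZMod (m*d)) * ((P.out j ⟨0, hd0⟩ μ' : ℕ) : ZMod (m*d)), fun v hv => ?_⟩
    have := reach_succ P (hc v hv) ⟨0, hd0⟩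
    have heq : v + c + (((⟨0, hd0⟩ : Fin d) : ℕ) : ZMod (m*d))
        - (d : ZMod (m*d)) * ((P.out j ⟨0, hd0⟩ μ' : ℕ) : ZMod (m*d))
      = v + (c + (((⟨0, hd0⟩ : Fin d) : ℕ) : ZMod (m*d))
        - (d : ZMod (m*d)) * ((P.out j ⟨0, hd0⟩ μ' : ℕ) : ZMod (m*d))) := by ring
    rwa [heq] at this

/-- Final correctness, in `ZMod (m*d)` form. -/
lemma final_zero (hP : P.Solves) (hdd : (d:ℕ) ∣ m * d) [NeZero (m*d)] (X : ℕ → Fin d)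
    (h0 : ZMod.castHom hdd (ZMod d) (V P X n) = 0) : V P X n = 0 := by
  set A : ℤ := ∑ i ∈ Finset.range n, ((X i : ℕ) : ℤ) with hA
  set B : ℤ := ∑ i ∈ Finset.range n, ((P.out i (X i) (P.run X i) : ℕ) : ℤ) with hB
  have hVX : V P X n = ((A - (d:ℤ) * B : ℤ) : ZMod (m*d)) := rfl
  have hcast : ((A - (d:ℤ) * B : ℤ) : ZMod d) = ((A : ℤ) : ZMod d) := by
    push_cast
    rw [ZMod.natCast_self]
    ring
  rw [hVX, map_intCast, hcast] at h0
  have hdvd : (d : ℤ) ∣ A := by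
    rwa [ZMod.intCast_zmod_eq_zero_iff_dvd] at h0
  have hmod := hP X hdvd
  have hdvd2 : ((m * d : ℕ) : ℤ) ∣ (A - (d:ℤ) * B) := by
    have := hmod.dvd
    push_cast
    convert this using 1
  rw [hVX, ZMod.intCast_zmod_eq_zero_iff_dvd]
  exact hdvd2

end ModGameAux

/-- **Theorem 1.**  If `m` is even and positive and `d = 2^s` with `s ≥ 1`, then in any
deterministic sequential protocol solving the sequential `n`-point modulo-`(m,d)` problem
with certainty, the number of stages `k ∈ {1,…,n-1}` whose message alphabet satisfies
`m * |M_k| < d` (i.e. fewer than `log₂(d/m)` bits are sent) is at most `m·d - 1`. -/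
theorem modulo_game_communication_lower_bound
    {n m d s : ℕ} (hm : 0 < m) (hmeven : Even m) (hs : 1 ≤ s) (hd : d = 2 ^ s)
    (P : SeqProtocol n m d) (hP : P.Solves) :
    ((Finset.Icc 1 (n - 1)).filter
        (fun k => m * (@Fintype.card (P.Msg k) (P.msgFintype k)) < d)).card
      ≤ m * d - 1 := by
  classical
  have hd0 : 0 < d := by rw [hd]; positivity
  haveI : NeZero (m * d) := ⟨by positivity⟩
  haveI : NeZero d := ⟨by omega⟩
  have hdd : (d : ℕ) ∣ m * d := dvd_mul_left d m
  by_cases hn : n ≤ 1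
  · have h0 : n - 1 = 0 := by omega
    rw [h0]
    have hemp : Finset.Icc 1 0 = (∅ : Finset ℕ) := by decide
    simp [hemp]
  push_neg at hn
  have key : ∀ k, k ≤ n - 1 → ∃ (μ : P.Msg k) (D : Finset (ZMod (m*d))),
      (∀ v ∈ D, ModGameAux.Reach P k μ v) ∧
      ((Finset.Icc 1 k).filter
        (fun j => m * (@Fintype.card (P.Msg j) (P.msgFintype j)) < d)).card + 1 ≤ D.card := by
    intro k
    induction k with
    | zero =>
      intro _
      refine ⟨P.msgInit, {0}, ?_, by simp⟩
      intro v hv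
      rw [Finset.mem_singleton] at hv
      subst hv
      exact ⟨fun _ => ⟨0, hd0⟩, rfl, by simp [ModGameAux.V, ModGameAux.VI]⟩
    | succ k ih =>
      intro hk1
      obtain ⟨μ, D, hre, hca⟩ := ih (by omega)
      have hIcc : Finset.Icc 1 (k+1) = insert (k+1) (Finset.Icc 1 k) :=
        (Finset.insert_Icc_right_eq_Icc_add_one (by omega)).symm
      have hknot : (k+1) ∉ Finset.Icc 1 k := by simp
      have hstep : ∀ (x : Fin d) (v : ZMod (m*d)), ModGameAux.Reach P k μ v →
          ModGameAux.Reach P (k+1) (P.send k x μ)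
            (v + (((x : ℕ) : ZMod (m*d))
              - (d : ZMod (m*d)) * ((P.out k x μ : ℕ) : ZMod (m*d)))) := by
        intro x v hv
        have h := ModGameAux.reach_succ P hv x
        have heq : v + (((x : ℕ) : ZMod (m*d))
              - (d : ZMod (m*d)) * ((P.out k x μ : ℕ) : ZMod (m*d)))
            = v + ((x : ℕ) : ZMod (m*d))
              - (d : ZMod (m*d)) * ((P.out k x μ : ℕ) : ZMod (m*d)) := by ring
        rwa [heq]
      by_cases hsmall : m * (@Fintype.card (P.Msg (k+1)) (P.msgFintype (k+1))) < d
      · -- small stage: pigeonhole gives a collision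
        letI instM : Fintype (P.Msg (k+1)) := P.msgFintype (k+1)
        have hcards : Fintype.card (P.Msg (k+1) × Fin m) < Fintype.card (Fin d) := by
          rw [Fintype.card_prod, Fintype.card_fin, Fintype.card_fin]
          have hinst : Fintype.card (P.Msg (k+1))
              = @Fintype.card (P.Msg (k+1)) (P.msgFintype (k+1)) := rfl
          rw [hinst, mul_comm]
          exact hsmall
        obtain ⟨x, x', hxx, heqc⟩ := Fintype.exists_ne_map_eq_of_card_lt
          (fun x : Fin d => (P.send k x μ, P.out k x μ)) hcards
        have hsend : P.send k x μ = P.send k x' μ := congrArg Prod.fst heqc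
        have hout : P.out k x μ = P.out k x' μ := congrArg Prod.snd heqc
        set a : ZMod (m*d) := ((x : ℕ) : ZMod (m*d))
          - (d : ZMod (m*d)) * ((P.out k x μ : ℕ) : ZMod (m*d)) with ha
        set b : ZMod (m*d) := ((x' : ℕ) : ZMod (m*d))
          - (d : ZMod (m*d)) * ((P.out k x' μ : ℕ) : ZMod (m*d)) with hb
        have hreA : ∀ v ∈ D, ModGameAux.Reach P (k+1) (P.send k x μ) (v + a) :=
          fun v hv => hstep x v (hre v hv)
        have hreB : ∀ v ∈ D, ModGameAux.Reach P (k+1) (P.send k x μ) (v + b) := by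
          intro v hv
          rw [hsend]
          exact hstep x' v (hre v hv)
        set A : Finset (ZMod (m*d)) := D.image (· + a) with hAdef
        set B : Finset (ZMod (m*d)) := D.image (· + b) with hBdef
        have hcardA : A.card = D.card :=
          Finset.card_image_of_injective _ (add_left_injective a)
        have hcardB : B.card = D.card :=
          Finset.card_image_of_injective _ (add_left_injective b)
        by_cases hBA : B ⊆ A
        · exfalso
          -- the stalled case: D is closed under translation by b - a
          have hAB : A = B := (Finset.eq_of_subset_of_card_le hBA
            (by rw [hcardA, hcardB])).symm
          have hclosed : ∀ v ∈ D, v + (b - a) ∈ D := by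
            intro v hv
            have hvB : v + b ∈ A := by
              rw [hAB]
              exact Finset.mem_image_of_mem _ hv
            obtain ⟨u, hu, huv⟩ := Finset.mem_image.mp hvB
            have h3 : v + (b - a) = u := by
              rw [show v + (b - a) = v + b - a from by ring, ← huv]
              ring
            rw [h3]
            exact hu
          -- numerical facts about the collision difference
          set e : ℤ := ((x' : ℕ) : ℤ) - ((x : ℕ) : ℤ) with he
          have hval : (x : ℕ) ≠ (x' : ℕ) := fun h => hxx (Fin.ext h)
          have he0 : e ≠ 0 := by
            intro h
            apply hval
            omega
          set a0 : ℕ := e.natAbs with ha0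
          have ha0pos : 0 < a0 := Int.natAbs_pos.mpr he0
          have hx1 : (x : ℕ) < d := x.isLt
          have hx2 : (x' : ℕ) < d := x'.isLt
          have ha0lt : a0 < d := by omega
          set t : ℕ := a0.factorization 2 with ht
          set u : ℕ := a0 / 2 ^ t with hu
          have hfac : 2 ^ t * u = a0 := Nat.ordProj_mul_ordCompl_eq_self a0 2
          have huodd : ¬ 2 ∣ u := Nat.not_dvd_ordCompl Nat.prime_two (by omega)
          have hts : t < s := by
            have h1 : 2 ^ t ≤ a0 := Nat.ordProj_le 2 (by omega)
            have h2 : 2 ^ t < 2 ^ s := lt_of_le_of_lt h1 (hd ▸ ha0lt)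
            exact (Nat.pow_lt_pow_iff_right (by norm_num)).mp h2
          set Q : ℕ := 2 ^ (s - t) with hQ
          have hqa : Q * a0 = d * u := by
            rw [hQ, ← hfac, hd, ← mul_assoc, ← pow_add, Nat.sub_add_cancel hts.le]
          have hδ : b - a = ((e : ℤ) : ZMod (m*d)) := by
            rw [ha, hb, hout, he]
            push_cast
            ring
          have hQδ : ((Q : ℕ) : ZMod (m*d)) * (b - a) = (((Q : ℕ) * e : ℤ) : ZMod (m*d)) := by
            rw [hδ]
            push_cast
            ring
          have hnatAbs : ((Q : ℤ) * e).natAbs = d * u := by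
            rw [Int.natAbs_mul, Int.natAbs_natCast, ← ha0, hqa]
          have hne0 : (((Q : ℕ) * e : ℤ) : ZMod (m*d)) ≠ 0 := by
            rw [Ne, ZMod.intCast_zmod_eq_zero_iff_dvd, Int.natCast_dvd, hnatAbs]
            intro hdvd
            have hmu : m ∣ u := by
              have h4 : d * m ∣ d * u := by rwa [mul_comm m d] at hdvd
              exact (Nat.mul_dvd_mul_iff_left hd0).mp h4
            exact huodd (dvd_trans hmeven.two_dvd hmu)
          have hcast0 : ZMod.castHom hdd (ZMod d) (((Q : ℕ) * e : ℤ) : ZMod (m*d)) = 0 := by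
            rw [map_intCast, ZMod.intCast_zmod_eq_zero_iff_dvd, Int.natCast_dvd, hnatAbs]
            exact dvd_mul_right d u
          -- an element of D and its translate by Q•(b-a)
          obtain ⟨v0, hv0⟩ : D.Nonempty := Finset.card_pos.mp (by omega)
          have hmulti : ∀ q : ℕ, v0 + ((q : ℕ) : ZMod (m*d)) * (b - a) ∈ D := by
            intro q
            induction q with
            | zero => simpa using hv0
            | succ q ihq =>
              have h5 := hclosed _ ihq
              have h6 : v0 + (((q+1 : ℕ) : ℕ) : ZMod (m*d)) * (b - a)
                  = v0 + ((q : ℕ) : ZMod (m*d)) * (b - a) + (b - a) := by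
                push_cast
                ring
              rw [h6]
              exact h5
          have hw1 : v0 + ((Q : ℕ) : ZMod (m*d)) * (b - a) ∈ D := hmulti Q
          -- push both to the end of the protocol
          obtain ⟨μ₂, c₂, hpad⟩ :=
            ModGameAux.reach_pad P hd0 (k+1) (n-1) hk1 (P.send k x μ)
          set r : ZMod d := ZMod.castHom hdd (ZMod d) (v0 + a + c₂) with hr
          set xf : Fin d := ⟨(-r).val, ZMod.val_lt _⟩ with hxf
          have hxfc : (((xf : Fin d) : ℕ) : ZMod d) = -r := ZMod.natCast_rightInverse (-r)
          have hnn : n - 1 + 1 = n := by omega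
          have hfinal : ∀ v ∈ D, ∃ X : ℕ → Fin d, ModGameAux.V P X n
              = v + a + c₂ + ((xf : ℕ) : ZMod (m*d))
                - (d : ZMod (m*d)) * ((P.out (n-1) xf μ₂ : ℕ) : ZMod (m*d)) := by
            intro v hv
            have h1 := hpad _ (hreA v hv)
            have h2 := ModGameAux.reach_succ P h1 xf
            obtain ⟨X, _, hVX⟩ := h2
            rw [hnn] at hVX
            exact ⟨X, hVX⟩
          have hcastcf : ∀ w : ZMod (m*d),
              ZMod.castHom hdd (ZMod d) (w + c₂ + ((xf : ℕ) : ZMod (m*d))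
                - (d : ZMod (m*d)) * ((P.out (n-1) xf μ₂ : ℕ) : ZMod (m*d)))
              = ZMod.castHom hdd (ZMod d) (w + c₂) + (((xf : ℕ)) : ZMod d) := by
            intro w
            rw [map_sub, map_add, map_mul, map_natCast, map_natCast, ZMod.natCast_self]
            ring
          obtain ⟨X1, hX1⟩ := hfinal v0 hv0
          have h01 : ZMod.castHom hdd (ZMod d) (ModGameAux.V P X1 n) = 0 := by
            rw [hX1]
            have := hcastcf (v0 + a)
            rw [this, hxfc, ← hr]
            ring
          have hz1 : v0 + a + c₂ + ((xf : ℕ) : ZMod (m*d))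
              - (d : ZMod (m*d)) * ((P.out (n-1) xf μ₂ : ℕ) : ZMod (m*d)) = 0 := by
            rw [← hX1]
            exact ModGameAux.final_zero P hP hdd X1 h01
          obtain ⟨X2, hX2⟩ := hfinal _ hw1
          have h02 : ZMod.castHom hdd (ZMod d) (ModGameAux.V P X2 n) = 0 := by
            rw [hX2]
            have := hcastcf (v0 + ((Q : ℕ) : ZMod (m*d)) * (b - a) + a)
            rw [this]
            have hsplit : v0 + ((Q : ℕ) : ZMod (m*d)) * (b - a) + a + c₂
                = (v0 + a + c₂) + ((Q : ℕ) : ZMod (m*d)) * (b - a) := by ring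
            rw [hsplit, map_add, ← hr, hQδ, hcast0, hxfc]
            ring
          have hz2 : v0 + ((Q : ℕ) : ZMod (m*d)) * (b - a) + a + c₂ + ((xf : ℕ) : ZMod (m*d))
              - (d : ZMod (m*d)) * ((P.out (n-1) xf μ₂ : ℕ) : ZMod (m*d)) = 0 := by
            rw [← hX2]
            exact ModGameAux.final_zero P hP hdd X2 h02
          apply hne0
          rw [← hQδ]
          linear_combination hz2 - hz1
        · -- the set strictly grows
          obtain ⟨w, hwB, hwA⟩ := Finset.not_subset.mp hBA
          refine ⟨P.send k x μ, insert w A, ?_, ?_⟩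
          · intro v hv
            rcases Finset.mem_insert.mp hv with h | h
            · subst h
              obtain ⟨u', hu', huw⟩ := Finset.mem_image.mp hwB
              rw [← huw]
              exact hreB u' hu'
            · obtain ⟨u', hu', huw⟩ := Finset.mem_image.mp h
              rw [← huw]
              exact hreA u' hu'
          · rw [Finset.card_insert_of_notMem hwA, hcardA, hIcc, Finset.filter_insert,
              if_pos hsmall, Finset.card_insert_of_notMem
                (fun hmem => hknot (Finset.mem_of_mem_filter _ hmem))]
            omega
      · -- large stage: just move forward with input 0
        refine ⟨P.send k ⟨0, hd0⟩ μ,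
          D.image (· + ((((⟨0, hd0⟩ : Fin d) : ℕ) : ZMod (m*d))
            - (d : ZMod (m*d)) * ((P.out k ⟨0, hd0⟩ μ : ℕ) : ZMod (m*d)))), ?_, ?_⟩
        · intro v hv
          obtain ⟨u', hu', huw⟩ := Finset.mem_image.mp hv
          rw [← huw]
          exact hstep ⟨0, hd0⟩ u' (hre u' hu')
        · rw [Finset.card_image_of_injective _ (add_left_injective _), hIcc,
            Finset.filter_insert, if_neg hsmall]
          exact hca
  obtain ⟨μ, D, hreach, hcard⟩ := key (n-1) le_rfl
  have hDle : D.card ≤ m * d := by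
    have h := Finset.card_le_univ D
    rwa [ZMod.card] at h
  omega
end

section
/- Let m be an even positive integer, let d = 2^s for some integer s ≥ 1, and let n ≥ m·d. For any sequence of integers Δ_1, …, Δ_n with 1 ≤ Δ_k ≤ m·d − 1 for every k, there exists a subset I ⊆ {1,…,n} such that ∑_{k∈I} Δ_k ≡ 0 (mod d) and ∑_{k∈I} Δ_k ≢ 0 (mod m·d). -/
/-- **Lemma 1 (generalized).**  Let `m` be an even positive integer, `d = 2^s` with
`s ≥ 1`, and `n ≥ m·d`.  For any integers `Δ_1, …, Δ_n` with `1 ≤ Δ_k ≤ m·d - 1`,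
there is a subset `I ⊆ {1,…,n}` whose sum is divisible by `d` but not by `m·d`. -/
theorem subset_sum_modulo_lemma
    {m d s n : ℕ} (hm : 0 < m) (hmeven : Even m) (hs : 1 ≤ s) (hd : d = 2 ^ s)
    (hn : m * d ≤ n) (Δ : ℕ → ℤ)
    (hΔ : ∀ k ∈ Finset.Icc 1 n, 1 ≤ Δ k ∧ Δ k ≤ (m : ℤ) * d - 1) :
    ∃ I ⊆ Finset.Icc 1 n,
      (d : ℤ) ∣ (∑ k ∈ I, Δ k) ∧ ¬ ((m : ℤ) * d ∣ (∑ k ∈ I, Δ k)) := by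
  by_contra hgoal
  push_neg at hgoal
  have hcon : ∀ I ⊆ Finset.Icc 1 n, (d : ℤ) ∣ (∑ k ∈ I, Δ k) →
      ((m : ℤ) * d ∣ (∑ k ∈ I, Δ k)) := hgoal
  have hdpos : 0 < d := by rw [hd]; positivity
  have hMpos : 0 < m * d := Nat.mul_pos hm hdpos
  haveI : NeZero (m * d) := ⟨hMpos.ne'⟩
  -- the set of subset-sum residues over `Icc 1 j`
  set T : ℕ → Finset (ZMod (m * d)) := fun j =>
    (Finset.Icc 1 j).powerset.image (fun I => ((∑ k ∈ I, Δ k : ℤ) : ZMod (m * d))) with hT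
  have hTmono : ∀ {i j : ℕ}, i ≤ j → T i ⊆ T j := by
    intro i j hij
    exact Finset.image_subset_image (Finset.powerset_mono.mpr
      (Finset.Icc_subset_Icc le_rfl hij))
  have h0mem : ∀ j, (0 : ZMod (m * d)) ∈ T j := by
    intro j
    apply Finset.mem_image.mpr
    exact ⟨∅, Finset.mem_powerset.mpr (Finset.empty_subset _), by simp⟩
  -- strict growth at every step
  have grow : ∀ j, j < n → (T j).card < (T (j + 1)).card := by
    intro j hj
    have hj1 : j + 1 ∈ Finset.Icc 1 n := Finset.mem_Icc.mpr ⟨Nat.succ_le_succ (Nat.zero_le j), hj⟩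
    obtain ⟨hΔ1, hΔ2⟩ := hΔ (j + 1) hj1
    set a : ZMod (m * d) := ((Δ (j + 1) : ℤ) : ZMod (m * d)) with ha
    by_contra hle
    have hle' : (T (j + 1)).card ≤ (T j).card := Nat.le_of_not_lt hle
    have hTsub : T j ⊆ T (j + 1) := hTmono (Nat.le_succ j)
    have hTeq : T j = T (j + 1) := Finset.eq_of_subset_of_card_le hTsub hle'
    -- the translate of `T j` by `a` sits inside `T (j+1)`
    have himg : ∀ x ∈ T j, x + a ∈ T j := by
      intro x hx
      rw [hTeq]
      obtain ⟨I, hIp, hIs⟩ := Finset.mem_image.mp hx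
      have hIsub : I ⊆ Finset.Icc 1 j := Finset.mem_powerset.mp hIp
      have hnotmem : j + 1 ∉ I := by
        intro hmem
        have := Finset.mem_Icc.mp (hIsub hmem)
        omega
      apply Finset.mem_image.mpr
      refine ⟨insert (j + 1) I, Finset.mem_powerset.mpr ?_, ?_⟩
      · intro x hx
        rcases Finset.mem_insert.mp hx with h | h
        · exact Finset.mem_Icc.mpr (by omega)
        · have := Finset.mem_Icc.mp (hIsub h); exact Finset.mem_Icc.mpr (by omega)
      · rw [Finset.sum_insert hnotmem, Int.cast_add, hIs, ha, add_comm]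
    -- hence all natural multiples of `a` lie in `T j`
    have hmul : ∀ t : ℕ, ((t : ZMod (m * d)) * a) ∈ T j := by
      intro t
      induction t with
      | zero => simpa using h0mem j
      | succ t ih =>
          have : ((t : ZMod (m * d)) * a) + a ∈ T j := himg _ ih
          convert this using 1
          push_cast
          ring
    -- arithmetic: produce a multiple of `Δ (j+1)` that is `≡ 0 (mod d)` but
    -- `≢ 0 (mod m*d)`
    set A : ℕ := (Δ (j + 1)).toNat with hA
    have hAcast : (A : ℤ) = Δ (j + 1) := Int.toNat_of_nonneg (by linarith)
    have hA1 : 1 ≤ A := by omega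
    have hAlt : A < m * d := by
      have h1 : (A : ℤ) < ((m * d : ℕ) : ℤ) := by rw [hAcast]; push_cast; linarith
      exact_mod_cast h1
    set g : ℕ := Nat.gcd A (m * d) with hg
    have hgpos : 0 < g := Nat.gcd_pos_of_pos_left _ hA1
    have hgdvdM : g ∣ m * d := Nat.gcd_dvd_right _ _
    have hgleA : g ≤ A := Nat.le_of_dvd hA1 (Nat.gcd_dvd_left _ _)
    set L : ℕ := Nat.lcm g d with hL
    have hdL : d ∣ L := Nat.dvd_lcm_right _ _
    have hgL : g ∣ L := Nat.dvd_lcm_left _ _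
    have hLdvdM : L ∣ m * d := Nat.lcm_dvd hgdvdM ⟨m, Nat.mul_comm m d⟩
    have hLpos : 0 < L := Nat.pos_of_ne_zero (Nat.lcm_ne_zero (by omega) (by omega))
    have hLlt : L < m * d := by
      rcases Nat.lt_or_ge L (m * d) with h | h
      · exact h
      · exfalso
        have hLeq : L = m * d := Nat.le_antisymm (Nat.le_of_dvd hMpos hLdvdM) h
        -- from gcd g d * lcm g d = g * d we get g = m * gcd g d
        have hkey : g * d = m * d * Nat.gcd g d := by
          rw [← Nat.gcd_mul_lcm g d, ← hL, hLeq]; ring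
        have hgmd : g = m * Nat.gcd g d := by
          have := Nat.eq_of_mul_eq_mul_right hdpos
            (show g * d = (m * Nat.gcd g d) * d by rw [hkey]; ring)
          exact this
        have hedvd : Nat.gcd g d ∣ 2 ^ s := hd ▸ Nat.gcd_dvd_right g d
        obtain ⟨t, hts, het⟩ := (Nat.dvd_prime_pow Nat.prime_two).mp hedvd
        rcases Nat.eq_or_lt_of_le hts with hts' | hts'
        · -- gcd g d = d forces g = m * d, impossible since g ≤ A < m*d
          have : g = m * d := by rw [hgmd, het, hts', ← hd]
          omega
        · -- 2^(t+1) divides both g and d, contradicting gcd g d = 2^t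
          obtain ⟨m', hm'⟩ := hmeven
          have h1 : 2 ^ (t + 1) ∣ g := by
            rw [hgmd, het, hm']
            exact ⟨m', by ring⟩
          have h2 : 2 ^ (t + 1) ∣ d := by
            rw [hd]
            exact pow_dvd_pow 2 hts'
          have h3 : 2 ^ (t + 1) ∣ Nat.gcd g d := Nat.dvd_gcd h1 h2
          rw [het] at h3
          have := Nat.le_of_dvd (Nat.pow_pos (n := t) (by norm_num : 0 < 2)) h3
          have := Nat.pow_lt_pow_succ (a := 2) (by norm_num) (n := t)
          omega
    -- Bezout: find an integer k with k * A ≡ L (mod m*d)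
    have hbez := Nat.gcd_eq_gcd_ab A (m * d)
    set k : ℤ := Nat.gcdA A (m * d) * ((L / g : ℕ) : ℤ) with hk
    have hdivmul : (g : ℤ) * ((L / g : ℕ) : ℤ) = (L : ℤ) := by
      exact_mod_cast congrArg (Nat.cast : ℕ → ℤ) (Nat.mul_div_cancel' hgL)
    have hkA : k * (A : ℤ) = (L : ℤ) - (m * d : ℕ) * (Nat.gcdB A (m * d) * ((L / g : ℕ) : ℤ)) := by
      have hbez' : (g : ℤ) = A * Nat.gcdA A (m * d) + (m * d : ℕ) * Nat.gcdB A (m * d) := by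
        rw [hg]; exact hbez
      have : (A : ℤ) * Nat.gcdA A (m * d) = (g : ℤ) - (m * d : ℕ) * Nat.gcdB A (m * d) := by
        linarith
      calc k * (A : ℤ) = ((A : ℤ) * Nat.gcdA A (m * d)) * ((L / g : ℕ) : ℤ) := by rw [hk]; ring
        _ = ((g : ℤ) - (m * d : ℕ) * Nat.gcdB A (m * d)) * ((L / g : ℕ) : ℤ) := by rw [this]
        _ = (g : ℤ) * ((L / g : ℕ) : ℤ) - (m * d : ℕ) * (Nat.gcdB A (m * d) * ((L / g : ℕ) : ℤ)) := by ring
        _ = (L : ℤ) - (m * d : ℕ) * (Nat.gcdB A (m * d) * ((L / g : ℕ) : ℤ)) := by rw [hdivmul]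
    -- hence (L : ZMod (m*d)) ∈ T j
    have hLmem : ((L : ℕ) : ZMod (m * d)) ∈ T j := by
      have hknonneg : 0 ≤ k % (m * d : ℕ) := Int.emod_nonneg k (by exact_mod_cast hMpos.ne')
      set t : ℕ := (k % (m * d : ℕ)).toNat with ht
      have htk : ((t : ℤ) : ZMod (m * d)) = (k : ZMod (m * d)) := by
        have h1 : (t : ℤ) = k % (m * d : ℕ) := Int.toNat_of_nonneg hknonneg
        rw [h1]
        apply (ZMod.intCast_eq_intCast_iff _ _ _).mpr
        exact Int.emod_emod_of_dvd k dvd_rfl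
      have hcalc : ((t : ℕ) : ZMod (m * d)) * a = ((L : ℕ) : ZMod (m * d)) := by
        have hAa : ((A : ℕ) : ZMod (m * d)) = a := by
          rw [ha, ← hAcast]
          push_cast
          rfl
        have hz := congrArg (fun z : ℤ => (z : ZMod (m * d))) hkA
        simp only [Int.cast_mul, Int.cast_sub, Int.cast_natCast, ZMod.natCast_self,
          zero_mul, sub_zero] at hz
        rw [← hAa, ← hz, ← htk]
        norm_cast
      rw [← hcalc]
      exact hmul t
    -- unpack: some subset of Icc 1 j has sum ≡ L (mod m*d)
    obtain ⟨I, hIp, hIs⟩ := Finset.mem_image.mp hLmem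
    have hIsub : I ⊆ Finset.Icc 1 n := by
      refine (Finset.mem_powerset.mp hIp).trans (Finset.Icc_subset_Icc le_rfl ?_)
      omega
    have hmdvd : ((m * d : ℕ) : ℤ) ∣ ((∑ k ∈ I, Δ k) - (L : ℤ)) := by
      have : ((∑ k ∈ I, Δ k : ℤ) : ZMod (m * d)) = ((L : ℤ) : ZMod (m * d)) := by
        rw [hIs]; push_cast; rfl
      have := (ZMod.intCast_eq_intCast_iff _ _ _).mp this
      exact Int.ModEq.dvd this.symm
    have hddvd : (d : ℤ) ∣ (∑ k ∈ I, Δ k) := by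
      have h1 : (d : ℤ) ∣ ((∑ k ∈ I, Δ k) - (L : ℤ)) := by
        refine dvd_trans ?_ hmdvd
        exact ⟨(m : ℤ), by push_cast; ring⟩
      have h2 : (d : ℤ) ∣ (L : ℤ) := by exact_mod_cast hdL
      have := dvd_add h1 h2
      simpa using this
    have hMdvd : ((m : ℤ) * d) ∣ (∑ k ∈ I, Δ k) := hcon I hIsub hddvd
    have hMdvdL : ((m * d : ℕ) : ℤ) ∣ (L : ℤ) := by
      have h1 : ((m * d : ℕ) : ℤ) ∣ (∑ k ∈ I, Δ k) := by push_cast; exact hMdvd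
      have := dvd_sub h1 hmdvd
      simpa using this
    have : (m * d : ℕ) ∣ L := Int.natCast_dvd_natCast.mp (by exact_mod_cast hMdvdL)
    have := Nat.le_of_dvd hLpos this
    omega
  -- strict growth gives card (T n) ≥ n + 1 > m*d, impossible
  have hcard : ∀ j, j ≤ n → j + 1 ≤ (T j).card := by
    intro j
    induction j with
    | zero =>
        intro _
        have : (T 0).Nonempty := ⟨0, h0mem 0⟩
        exact Finset.card_pos.mpr this
    | succ i ih =>
        intro hin
        have h1 : i + 1 ≤ (T i).card := ih (by omega)
        have h2 : (T i).card < (T (i + 1)).card := grow i (by omega)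
        omega
  have hfin : (T n).card ≤ m * d := by
    have := Finset.card_le_univ (T n)
    simpa [ZMod.card (m * d)] using this
  have := hcard n le_rfl
  omega
end

section
/- Let m ≥ 2 be an even integer and let d be a power of two with m² < d ≤ 2m². Then for every n ≥ 2m³, there is no deterministic sequential protocol for n parties, all of whose message alphabets M_1,…,M_{n−1} have size at most m, that solves the sequential n-point modulo-(m,d) problem with certainty. (Equivalently: any classical simulation of the temporal GHZ correlations of a single m-level system for n ≥ 2m³ measurements must at some stage communicate strictly more than log₂ m bits, exceeding the Holevo bound of the system.) -/
namespace NoHolevoAux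

open Finset

variable {n m d : ℕ}

/-- integer input sum of the first `k` inputs -/
def Sv (X : ℕ → Fin d) (k : ℕ) : ℤ := ∑ j ∈ Finset.range k, ((X j : ℕ) : ℤ)

/-- integer output sum of the first `k` outputs -/
def Tv (P : SeqProtocol n m d) (X : ℕ → Fin d) (k : ℕ) : ℤ :=
  ∑ j ∈ Finset.range k, ((P.out j (X j) (P.run X j) : ℕ) : ℤ)

lemma run_congr (P : SeqProtocol n m d) {X X' : ℕ → Fin d} :
    ∀ k, (∀ j, j < k → X j = X' j) → P.run X k = P.run X' k := by
  intro k
  induction k with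
  | zero => intro _; rfl
  | succ k ih =>
      intro h
      show P.send k (X k) (P.run X k) = P.send k (X' k) (P.run X' k)
      rw [ih (fun j hj => h j (Nat.lt_succ_of_lt hj)), h k (Nat.lt_succ_self k)]

lemma Sv_congr {X X' : ℕ → Fin d} (k : ℕ) (h : ∀ j, j < k → X j = X' j) :
    Sv X k = Sv X' k := by
  unfold Sv
  exact Finset.sum_congr rfl (fun j hj => by rw [h j (Finset.mem_range.mp hj)])

lemma Tv_congr (P : SeqProtocol n m d) {X X' : ℕ → Fin d} (k : ℕ)
    (h : ∀ j, j < k → X j = X' j) : Tv P X k = Tv P X' k := by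
  unfold Tv
  refine Finset.sum_congr rfl (fun j hj => ?_)
  have hj' := Finset.mem_range.mp hj
  rw [h j hj', run_congr P j (fun i hi => h i (hi.trans hj'))]

lemma run_tail (P : SeqProtocol n m d) {X X' : ℕ → Fin d} {k : ℕ}
    (hk : P.run X k = P.run X' k) (h : ∀ j, k ≤ j → X j = X' j) :
    ∀ t, P.run X (k + t) = P.run X' (k + t) := by
  intro t
  induction t with
  | zero => exact hk
  | succ t ih =>
      show P.run X (k + t + 1) = P.run X' (k + t + 1)
      show P.send (k+t) (X (k+t)) (P.run X (k+t)) = P.send (k+t) (X' (k+t)) (P.run X' (k+t))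
      rw [ih, h (k+t) (Nat.le_add_right k t)]


/-- Key uniqueness lemma: if two length-`k` prefixes lead to the same message and have
the same input sum mod `d`, then `S - d·T` agrees mod `m·d`. -/
lemma key (P : SeqProtocol n m d) (hd : 0 < d) (hS : P.Solves) {k : ℕ} (hk : k < n)
    {X X' : ℕ → Fin d} (hrun : P.run X k = P.run X' k)
    (hsum : ((Sv X k : ℤ) : ZMod d) = ((Sv X' k : ℤ) : ZMod d)) :
    ((Sv X k - d * Tv P X k : ℤ) : ZMod (m * d)) =
      ((Sv X' k - d * Tv P X' k : ℤ) : ZMod (m * d)) := by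
  haveI : NeZero d := ⟨hd.ne'⟩
  set σ : ZMod d := -((Sv X k : ℤ) : ZMod d) with hσ
  set fill : Fin d := ⟨σ.val, ZMod.val_lt σ⟩ with hfill
  set Z : ℕ → Fin d := fun j => if j < k then X j else if j = k then fill else ⟨0, hd⟩ with hZ
  set Z' : ℕ → Fin d := fun j => if j < k then X' j else if j = k then fill else ⟨0, hd⟩ with hZ'
  have hZlt : ∀ j, j < k → Z j = X j := fun j hj => by simp [hZ, hj]
  have hZlt' : ∀ j, j < k → Z' j = X' j := fun j hj => by simp [hZ', hj]
  have hZge : ∀ j, k ≤ j → Z j = Z' j := by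
    intro j hj
    rcases eq_or_lt_of_le hj with h | h
    · simp [hZ, hZ', ← h]
    · have : ¬ j < k := by omega
      have : j ≠ k := by omega
      simp [hZ, hZ', *]
  -- runs agree
  have hrunZX : ∀ j, j ≤ k → P.run Z j = P.run X j :=
    fun j hj => run_congr P j (fun i hi => hZlt i (lt_of_lt_of_le hi hj))
  have hrunZX' : ∀ j, j ≤ k → P.run Z' j = P.run X' j :=
    fun j hj => run_congr P j (fun i hi => hZlt' i (lt_of_lt_of_le hi hj))
  have hrunZZ : ∀ j, k ≤ j → P.run Z j = P.run Z' j := by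
    intro j hj
    obtain ⟨t, rfl⟩ := Nat.exists_eq_add_of_le hj
    exact run_tail P (by rw [hrunZX k le_rfl, hrunZX' k le_rfl, hrun]) hZge t
  -- sums split
  have hsplitS : Sv Z n = Sv X k + (fill : ℕ) := by
    unfold Sv
    rw [Finset.range_eq_Ico, ← Finset.sum_Ico_consecutive _ (Nat.zero_le k) (le_of_lt hk)]
    rw [← Finset.range_eq_Ico]
    have h1 : ∑ j ∈ Finset.range k, ((Z j : ℕ) : ℤ) = ∑ j ∈ Finset.range k, ((X j : ℕ) : ℤ) :=
      Finset.sum_congr rfl (fun j hj => by rw [hZlt j (Finset.mem_range.mp hj)])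
    have h2 : ∑ j ∈ Finset.Ico k n, ((Z j : ℕ) : ℤ) = ((fill : ℕ) : ℤ) := by
      rw [Finset.sum_eq_single_of_mem k (Finset.mem_Ico.mpr ⟨le_rfl, hk⟩)]
      · simp [hZ]
      · intro j hj hjk
        have hj' := Finset.mem_Ico.mp hj
        have h1 : ¬ j < k := by omega
        simp [hZ, h1, hjk]
    rw [h1, h2]
  have hsplitS' : Sv Z' n = Sv X' k + (fill : ℕ) := by
    unfold Sv
    rw [Finset.range_eq_Ico, ← Finset.sum_Ico_consecutive _ (Nat.zero_le k) (le_of_lt hk)]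
    rw [← Finset.range_eq_Ico]
    have h1 : ∑ j ∈ Finset.range k, ((Z' j : ℕ) : ℤ) = ∑ j ∈ Finset.range k, ((X' j : ℕ) : ℤ) :=
      Finset.sum_congr rfl (fun j hj => by rw [hZlt' j (Finset.mem_range.mp hj)])
    have h2 : ∑ j ∈ Finset.Ico k n, ((Z' j : ℕ) : ℤ) = ((fill : ℕ) : ℤ) := by
      rw [Finset.sum_eq_single_of_mem k (Finset.mem_Ico.mpr ⟨le_rfl, hk⟩)]
      · simp [hZ']
      · intro j hj hjk
        have hj' := Finset.mem_Ico.mp hj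
        have h1 : ¬ j < k := by omega
        simp [hZ', h1, hjk]
    rw [h1, h2]
  -- output sums split, with a common tail E
  set E : ℤ := ∑ j ∈ Finset.Ico k n, ((P.out j (Z j) (P.run Z j) : ℕ) : ℤ) with hE
  have hsplitT : Tv P Z n = Tv P X k + E := by
    unfold Tv
    rw [Finset.range_eq_Ico, ← Finset.sum_Ico_consecutive _ (Nat.zero_le k) (le_of_lt hk)]
    rw [← Finset.range_eq_Ico, hE]
    congr 1
    refine Finset.sum_congr rfl (fun j hj => ?_)
    have hj' := Finset.mem_range.mp hj
    rw [hZlt j hj', hrunZX j (le_of_lt hj')]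
  have hEE : E = ∑ j ∈ Finset.Ico k n, ((P.out j (Z' j) (P.run Z' j) : ℕ) : ℤ) := by
    rw [hE]
    refine Finset.sum_congr rfl (fun j hj => ?_)
    have hj' := (Finset.mem_Ico.mp hj).1
    rw [hZge j hj', hrunZZ j hj']
  have hsplitT' : Tv P Z' n = Tv P X' k + E := by
    unfold Tv
    rw [Finset.range_eq_Ico, ← Finset.sum_Ico_consecutive _ (Nat.zero_le k) (le_of_lt hk)]
    rw [← Finset.range_eq_Ico, hEE]
    congr 1
    refine Finset.sum_congr rfl (fun j hj => ?_)
    have hj' := Finset.mem_range.mp hj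
    rw [hZlt' j hj', hrunZX' j (le_of_lt hj')]
  -- divisibility of the two full sums
  have hfillcast : ((σ.val : ℕ) : ZMod d) = σ := by
    simp [ZMod.natCast_val, ZMod.cast_id]
  have hdvd : (d : ℤ) ∣ Sv Z n := by
    rw [← ZMod.intCast_zmod_eq_zero_iff_dvd, hsplitS]
    push_cast
    rw [hfillcast]
    rw [hσ]; ring
  have hdvd' : (d : ℤ) ∣ Sv Z' n := by
    rw [← ZMod.intCast_zmod_eq_zero_iff_dvd, hsplitS']
    push_cast
    rw [hfillcast, ← hsum, hσ]; ring
  -- apply Solves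
  have hc := hS Z hdvd
  have hc' := hS Z' hdvd'
  -- convert to ZMod (m*d) equalities
  have hmd : ((m : ℤ) * d) = ((m * d : ℕ) : ℤ) := by push_cast; ring
  have hcz : ((d * Tv P Z n : ℤ) : ZMod (m * d)) = ((Sv Z n : ℤ) : ZMod (m * d)) := by
    rw [ZMod.intCast_eq_intCast_iff]
    exact (hmd ▸ hc)
  have hcz' : ((d * Tv P Z' n : ℤ) : ZMod (m * d)) = ((Sv Z' n : ℤ) : ZMod (m * d)) := by
    rw [ZMod.intCast_eq_intCast_iff]
    exact (hmd ▸ hc')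
  have key1 : ((Sv X k - d * Tv P X k : ℤ) : ZMod (m * d)) =
      (((d * E - (fill : ℕ) : ℤ)) : ZMod (m * d)) := by
    have : (Sv X k - d * Tv P X k : ℤ) = (Sv Z n - d * Tv P Z n) + (d * E - (fill : ℕ)) := by
      rw [hsplitS, hsplitT]; ring
    rw [this]
    push_cast
    push_cast at hcz
    rw [hcz]
    ring
  have key2 : ((Sv X' k - d * Tv P X' k : ℤ) : ZMod (m * d)) =
      (((d * E - (fill : ℕ) : ℤ)) : ZMod (m * d)) := by
    have : (Sv X' k - d * Tv P X' k : ℤ) = (Sv Z' n - d * Tv P Z' n) + (d * E - (fill : ℕ)) := by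
      rw [hsplitS', hsplitT']; ring
    rw [this]
    push_cast
    push_cast at hcz'
    rw [hcz']
    ring
  rw [key1, key2]



/-- `R` is a set of residues reachable at stage `k` with common message `μ`. -/
def Reach (P : SeqProtocol n m d) (k : ℕ) (μ : P.Msg k) (R : Finset (ZMod d)) : Prop :=
  ∀ r ∈ R, ∃ X : ℕ → Fin d, P.run X k = μ ∧ ((Sv X k : ℤ) : ZMod d) = r

lemma update_run (P : SeqProtocol n m d) (X : ℕ → Fin d) (k : ℕ) (x : Fin d) :
    P.run (Function.update X k x) (k+1) = P.send k x (P.run X k) := by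
  show P.send k (Function.update X k x k) (P.run (Function.update X k x) k) = _
  rw [Function.update_self]
  rw [run_congr P (X := Function.update X k x) (X' := X) k
    (fun j hj => Function.update_of_ne (by omega) _ _)]

lemma update_Sv (X : ℕ → Fin d) (k : ℕ) (x : Fin d) :
    Sv (Function.update X k x) (k+1) = Sv X k + ((x : ℕ) : ℤ) := by
  unfold Sv
  rw [Finset.sum_range_succ, Function.update_self]
  congr 1
  exact Finset.sum_congr rfl fun j hj => by
    rw [Function.update_of_ne (by have := Finset.mem_range.mp hj; omega) _ _]

lemma update_Tv (P : SeqProtocol n m d) (X : ℕ → Fin d) (k : ℕ) (x : Fin d) :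
    Tv P (Function.update X k x) (k+1) = Tv P X k + ((P.out k x (P.run X k) : ℕ) : ℤ) := by
  unfold Tv
  rw [Finset.sum_range_succ, Function.update_self]
  congr 1
  · exact Finset.sum_congr rfl fun j hj => by
      have hj' := Finset.mem_range.mp hj
      rw [Function.update_of_ne (by omega : j ≠ k) _ _,
        run_congr P (X := Function.update X k x) (X' := X) j
          (fun i hi => Function.update_of_ne (by omega) _ _)]
  · rw [run_congr P (X := Function.update X k x) (X' := X) k
      (fun j hj => Function.update_of_ne (by omega) _ _)]

/-- One growth step: some send-fiber `C` with more than `m` inputs, pushing `R` to `R + C`. -/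
lemma step (P : SeqProtocol n m d) (hd : 0 < d) (hmm : m * m < d) {k : ℕ}
    (hcard : @Fintype.card _ (P.msgFintype (k+1)) ≤ m) {μ : P.Msg k} {R : Finset (ZMod d)}
    (hR : Reach P k μ R) :
    ∃ (ν : P.Msg (k+1)) (C : Finset (Fin d)), m < C.card ∧
      (∀ x ∈ C, P.send k x μ = ν) ∧
      Reach P (k+1) ν (Finset.image₂ (fun r (x : Fin d) => r + ((x : ℕ) : ZMod d)) R C) := by
  haveI : NeZero d := ⟨hd.ne'⟩
  letI := P.msgFintype (k+1)
  letI : DecidableEq (P.Msg (k+1)) := Classical.decEq _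
  obtain ⟨ν, -, hν⟩ := Finset.exists_lt_card_fiber_of_mul_lt_card_of_maps_to
    (s := (Finset.univ : Finset (Fin d))) (t := (Finset.univ : Finset (P.Msg (k+1))))
    (f := fun x : Fin d => P.send k x μ) (n := m)
    (fun a _ => Finset.mem_univ _)
    (by
      rw [Finset.card_univ, Finset.card_univ, Fintype.card_fin]
      calc Fintype.card (P.Msg (k+1)) * m ≤ m * m := Nat.mul_le_mul_right m hcard
        _ < d := hmm)
  refine ⟨ν, Finset.univ.filter (fun x => P.send k x μ = ν), hν,
    fun x hx => (Finset.mem_filter.mp hx).2, ?_⟩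
  intro ρ hρ
  obtain ⟨r, hr, x, hx, rfl⟩ := Finset.mem_image₂.mp hρ
  obtain ⟨X, hXr, hXs⟩ := hR r hr
  refine ⟨Function.update X k x, ?_, ?_⟩
  · rw [update_run, hXr]
    exact (Finset.mem_filter.mp hx).2
  · rw [update_Sv]
    push_cast
    rw [hXs]

/-- From a stagnant step extract a large stabilizer of `R`. -/
lemma stab_card [NeZero d] {R : Finset (ZMod d)} {C : Finset (Fin d)} (hmC : m < C.card)
    (hstag : (Finset.image₂ (fun r (x : Fin d) => r + ((x : ℕ) : ZMod d)) R C).card = R.card) :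
    m < (Finset.univ.filter (fun g : ZMod d => R.image (· + g) = R)).card := by
  set R' := Finset.image₂ (fun r (x : Fin d) => r + ((x : ℕ) : ZMod d)) R C with hR'
  have himg : ∀ c ∈ C, R.image (· + ((c : ℕ) : ZMod d)) = R' := by
    intro c hc
    apply Finset.eq_of_subset_of_card_le
    · intro ρ hρ
      obtain ⟨r, hr, rfl⟩ := Finset.mem_image.mp hρ
      exact Finset.mem_image₂_of_mem hr hc
    · rw [Finset.card_image_of_injective _ (add_left_injective _), hstag]
  have hstab : ∀ c ∈ C, ∀ c' ∈ C,
      R.image (· + (((c : ℕ) : ZMod d) - ((c' : ℕ) : ZMod d))) = R := by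
    intro c hc c' hc'
    have h1 : R.image (· + ((c : ℕ) : ZMod d)) = R.image (· + ((c' : ℕ) : ZMod d)) := by
      rw [himg c hc, himg c' hc']
    have h2 : (R.image (· + ((c : ℕ) : ZMod d))).image (· + (-((c' : ℕ) : ZMod d)))
        = R.image (· + (((c : ℕ) : ZMod d) - ((c' : ℕ) : ZMod d))) := by
      rw [Finset.image_image]
      exact Finset.image_congr (fun r _ => by simp [Function.comp]; ring)
    have h3 : (R.image (· + ((c' : ℕ) : ZMod d))).image (· + (-((c' : ℕ) : ZMod d))) = R := by
      rw [Finset.image_image]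
      have : ((· + (-((c' : ℕ) : ZMod d))) ∘ (· + ((c' : ℕ) : ZMod d))) = id := by
        funext r; simp
      rw [this, Finset.image_id]
    rw [← h2, h1, h3]
  obtain ⟨c₀, hc₀⟩ : C.Nonempty := Finset.card_pos.mp (by omega)
  have hinj : Set.InjOn (fun c : Fin d => ((c : ℕ) : ZMod d) - ((c₀ : ℕ) : ZMod d)) C := by
    intro a ha b hb hab
    have : ((a : ℕ) : ZMod d) = ((b : ℕ) : ZMod d) := by
      have := sub_left_injective (G := ZMod d) hab
      exact this
    have hv : (a : ℕ) = (b : ℕ) := by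
      have h1 := ZMod.val_cast_of_lt (a := (a : ℕ)) (by exact a.isLt)
      have h2 := ZMod.val_cast_of_lt (a := (b : ℕ)) (by exact b.isLt)
      rw [← h1, ← h2, this]
    exact Fin.ext hv
  calc m < C.card := hmC
    _ ≤ _ := Finset.card_le_card_of_injOn _
        (fun c hc => Finset.mem_filter.mpr ⟨Finset.mem_univ _, hstab c hc c₀ hc₀⟩) hinj

lemma grow (P : SeqProtocol n m d) [NeZero d] (hmm : m * m < d)
    (hcard : ∀ k ∈ Finset.Icc 1 (n-1), @Fintype.card _ (P.msgFintype k) ≤ m)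
    (hn' : d + 2 ≤ n - 1) : ∀ t, t ≤ d →
    (∃ (k : ℕ) (μ : P.Msg k) (R : Finset (ZMod d)), 1 ≤ k ∧ k + 1 ≤ n - 1 ∧
        Reach P k μ R ∧ R.Nonempty ∧
        m < (Finset.univ.filter (fun g : ZMod d => R.image (· + g) = R)).card) ∨
    (∃ (k : ℕ) (μ : P.Msg k) (R : Finset (ZMod d)), 1 ≤ k ∧ k ≤ 1 + t ∧
        Reach P k μ R ∧ 1 + t ≤ R.card) := by
  have hd : 0 < d := Nat.pos_of_ne_zero (NeZero.ne d)
  intro t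
  induction t with
  | zero =>
      intro _
      right
      set X : ℕ → Fin d := fun _ => ⟨0, hd⟩ with hX
      refine ⟨1, P.run X 1, {(0 : ZMod d)}, le_rfl, le_rfl, ?_, ?_⟩
      · intro r hr
        rw [Finset.mem_singleton] at hr
        subst hr
        exact ⟨X, rfl, by simp [Sv, hX]⟩
      · simp
  | succ t ih =>
      intro ht
      rcases ih (by omega) with h | ⟨k, μ, R, hk1, hk2, hR, hRcard⟩
      · exact Or.inl h
      have hkn : k + 1 + 1 ≤ n - 1 := by omega
      obtain ⟨ν, C, hC, hfib, hR'⟩ := step P hd hmm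
        (hcard (k+1) (Finset.mem_Icc.mpr ⟨by omega, by omega⟩)) hR
      set R' := Finset.image₂ (fun r (x : Fin d) => r + ((x : ℕ) : ZMod d)) R C with hR'def
      have hle : R.card ≤ R'.card := by
        obtain ⟨c₀, hc₀⟩ : C.Nonempty := Finset.card_pos.mp (by omega)
        calc R.card = (R.image (· + ((c₀ : ℕ) : ZMod d))).card :=
              (Finset.card_image_of_injective _ (add_left_injective _)).symm
          _ ≤ R'.card := Finset.card_le_card
              (fun ρ hρ => by
                obtain ⟨r, hr, rfl⟩ := Finset.mem_image.mp hρ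
                exact Finset.mem_image₂_of_mem hr hc₀)
      by_cases hstag : R'.card = R.card
      · exact Or.inl ⟨k, μ, R, hk1, by omega, hR, Finset.card_pos.mp (by omega),
          stab_card hC hstag⟩
      · exact Or.inr ⟨k+1, ν, R', by omega, by omega, hR', by omega⟩

lemma exists_stag (P : SeqProtocol n m d) [NeZero d] (hmm : m * m < d)
    (hcard : ∀ k ∈ Finset.Icc 1 (n-1), @Fintype.card _ (P.msgFintype k) ≤ m)
    (hn' : d + 2 ≤ n - 1) :
    ∃ (k : ℕ) (μ : P.Msg k) (R : Finset (ZMod d)), 1 ≤ k ∧ k + 1 ≤ n - 1 ∧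
        Reach P k μ R ∧ R.Nonempty ∧
        m < (Finset.univ.filter (fun g : ZMod d => R.image (· + g) = R)).card := by
  rcases grow P hmm hcard hn' d le_rfl with h | ⟨k, μ, R, _, _, _, hRcard⟩
  · exact h
  · exfalso
    have : R.card ≤ d := by
      have h1 := Finset.card_le_univ R
      rwa [ZMod.card d] at h1
    omega

lemma torsion_card [NeZero d] {M : ℕ} (hM : M ∣ d) (hM0 : 0 < M) :
    (Finset.univ.filter (fun x : ZMod d => (M : ZMod d) * x = 0)).card ≤ M := by
  have hd : 0 < d := Nat.pos_of_ne_zero (NeZero.ne d)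
  obtain ⟨D, hD⟩ := hM
  have hD0 : 0 < D := by
    rcases Nat.eq_zero_or_pos D with h | h
    · rw [h, mul_zero] at hD; omega
    · exact h
  have hdvdval : ∀ x : ZMod d, (M : ZMod d) * x = 0 → D ∣ x.val := by
    intro x hx
    have h1 : ((M * x.val : ℕ) : ZMod d) = 0 := by
      push_cast
      rw [ZMod.natCast_val, ZMod.cast_id]
      exact hx
    have h2 : d ∣ M * x.val := (ZMod.natCast_eq_zero_iff _ _).mp h1
    have h2' : M * D ∣ M * x.val := by rw [← hD]; exact h2
    exact (mul_dvd_mul_iff_left (by omega : M ≠ 0)).mp h2'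
  apply le_trans (Finset.card_le_card_of_injOn (fun x : ZMod d => x.val / D) ?_ ?_)
    (le_of_eq (Finset.card_range M))
  · intro x hx
    rw [Finset.mem_coe, Finset.mem_range]
    have hxv : x.val < D * M := by rw [mul_comm, ← hD]; exact ZMod.val_lt x
    exact Nat.div_lt_of_lt_mul hxv
  · intro x hx y hy hxy
    have hx' := hdvdval x (Finset.mem_filter.mp hx).2
    have hy' := hdvdval y (Finset.mem_filter.mp hy).2
    have hval : x.val = y.val := by
      have e1 : x.val = D * (x.val / D) := (Nat.mul_div_cancel' hx').symm
      have e2 : y.val = D * (y.val / D) := (Nat.mul_div_cancel' hy').symm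
      simp only at hxy
      rw [e1, e2, hxy]
    exact ZMod.val_injective d hval

lemma ctors [NeZero d] {s : ℕ} (hds : d = 2 ^ s) (hm0 : 0 < m) {δ : ZMod d}
    (hδ : ((2 ^ (Nat.log 2 m) : ℕ) : ZMod d) * δ ≠ 0) :
    ∀ c : ℕ, 1 ≤ c → c ≤ m → ((c : ℕ) : ZMod d) * δ ≠ 0 := by
  intro c hc1 hcm hc0
  apply hδ
  set g := Nat.gcd c d with hg
  have hgc : g ∣ c := Nat.gcd_dvd_left c d
  have hgd : g ∣ d := Nat.gcd_dvd_right c d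
  have hgzero : ((g : ℕ) : ZMod d) * δ = 0 := by
    have hbez : (g : ℤ) = c * Nat.gcdA c d + d * Nat.gcdB c d := Nat.gcd_eq_gcd_ab c d
    have h1 : ((g : ℤ) : ZMod d) = ((c : ℤ) : ZMod d) * ((Nat.gcdA c d : ℤ) : ZMod d) := by
      rw [hbez]
      push_cast
      rw [ZMod.natCast_self]
      ring
    have hgz : ((g : ℕ) : ZMod d) = ((c : ℕ) : ZMod d) * ((Nat.gcdA c d : ℤ) : ZMod d) := by
      exact_mod_cast h1
    rw [hgz, mul_comm ((c : ℕ) : ZMod d) _, mul_assoc, hc0, mul_zero]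
  obtain ⟨t, ht, hgt⟩ := (Nat.dvd_prime_pow Nat.prime_two).mp (hds ▸ hgd)
  have hgle : g ≤ c := Nat.le_of_dvd (by omega) hgc
  have htlog : t ≤ Nat.log 2 m := by
    apply Nat.le_log_of_pow_le (by norm_num)
    omega
  obtain ⟨e, he⟩ : ∃ e, Nat.log 2 m = t + e := ⟨Nat.log 2 m - t, by omega⟩
  rw [he, pow_add]
  push_cast
  rw [mul_comm ((2:ZMod d)^t) _, mul_assoc]
  rw [show ((2:ZMod d)^t) = ((g : ℕ) : ZMod d) by rw [hgt]; push_cast; ring]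
  rw [hgzero, mul_zero]

lemma phase2 (P : SeqProtocol n m d) [NeZero d] (hS : P.Solves)
    (hm2 : 2 ≤ m) (hmeven : Even m) {s : ℕ} (hds : d = 2 ^ s) (hmd : m < d)
    {k : ℕ} (hk1 : k + 1 ≤ n - 1) (hn1 : 1 ≤ n)
    (hcard : @Fintype.card _ (P.msgFintype (k+1)) ≤ m)
    {μ : P.Msg k} {R : Finset (ZMod d)} (hR : Reach P k μ R) (hRne : R.Nonempty)
    (hstab : m < (Finset.univ.filter (fun g : ZMod d => R.image (· + g) = R)).card) :
    False := by
  have hd : 0 < d := Nat.pos_of_ne_zero (NeZero.ne d)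
  set a := Nat.log 2 m with ha
  have hM0m : 2 ^ a ≤ m := Nat.pow_log_le_self 2 (by omega)
  have has : a < s := by
    have h2 : (2:ℕ) ^ a < 2 ^ s := by omega
    exact (Nat.pow_lt_pow_iff_right (by norm_num)).mp h2
  have hM0d : (2 ^ a : ℕ) ∣ d := hds ▸ pow_dvd_pow 2 (le_of_lt has)
  have hNcard := torsion_card (d := d) hM0d (Nat.pow_pos (by norm_num))
  have hnotsub : ¬ ((Finset.univ.filter (fun g : ZMod d => R.image (· + g) = R))
      ⊆ (Finset.univ.filter (fun x : ZMod d => ((2^a : ℕ) : ZMod d) * x = 0))) := by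
    intro hsub
    have := Finset.card_le_card hsub
    omega
  obtain ⟨δ, hδSt, hδN⟩ := Finset.not_subset.mp hnotsub
  have hδstab : R.image (· + δ) = R := (Finset.mem_filter.mp hδSt).2
  have hδtor : ((2 ^ a : ℕ) : ZMod d) * δ ≠ 0 := by
    intro h
    exact hδN (Finset.mem_filter.mpr ⟨Finset.mem_univ _, h⟩)
  -- multiples of δ stabilize R
  have himg : ∀ c : ℕ, R.image (· + ((c : ℕ) : ZMod d) * δ) = R := by
    intro c
    induction c with
    | zero => simp
    | succ c ih =>
        have hcomp : R.image (· + (((c+1 : ℕ) : ZMod d) * δ))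
            = (R.image (· + ((c : ℕ) : ZMod d) * δ)).image (· + δ) := by
          rw [Finset.image_image]
          refine Finset.image_congr (fun r _ => ?_)
          simp only [Function.comp]
          push_cast
          ring
        rw [hcomp, ih, hδstab]
  have hmem : ∀ (c : ℕ), ∀ r ∈ R, r + ((c : ℕ) : ZMod d) * δ ∈ R := by
    intro c r hr
    have h1 : r + ((c : ℕ) : ZMod d) * δ ∈ R.image (· + ((c : ℕ) : ZMod d) * δ) :=
      Finset.mem_image_of_mem _ hr
    rwa [himg c] at h1
  -- choose witnesses
  haveI : Inhabited (ℕ → Fin d) := ⟨fun _ => ⟨0, hd⟩⟩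
  choose! W hW1 hW2 using hR
  set Lam : ZMod d → ZMod (m * d) :=
    fun r => ((Sv (W r) k - d * Tv P (W r) k : ℤ) : ZMod (m * d)) with hLam
  -- the m+1 split inputs
  set u : Fin (m+1) → ZMod d := fun i => ((i : ℕ) : ZMod d) * δ with hu
  set xin : Fin (m+1) → Fin d := fun i => ⟨(u i).val, ZMod.val_lt _⟩ with hxin
  set ν : Fin (m+1) → P.Msg (k+1) := fun i => P.send k (xin i) μ with hν
  letI := P.msgFintype (k+1)
  obtain ⟨i0, j0, hij0, hν0⟩ := Fintype.exists_ne_map_eq_of_card_lt ν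
    (by rw [Fintype.card_fin]; omega)
  obtain ⟨i, j, hlt, hνij⟩ : ∃ i j : Fin (m+1), (i : ℕ) < (j : ℕ) ∧ ν i = ν j := by
    rcases Nat.lt_or_ge (i0 : ℕ) (j0 : ℕ) with h | h
    · exact ⟨i0, j0, h, hν0⟩
    · have hlt' : (j0 : ℕ) < (i0 : ℕ) :=
        lt_of_le_of_ne h (fun hh => hij0 (Fin.ext hh.symm))
      exact ⟨j0, i0, hlt', hν0.symm⟩
  set c : ℕ := (j : ℕ) - (i : ℕ) with hc
  have hc1 : 1 ≤ c := by omega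
  have hcm : c ≤ m := by have := j.isLt; omega
  set ε : ZMod d := ((c : ℕ) : ZMod d) * δ with hε
  have hε0 : ε ≠ 0 := ctors hds (by omega) hδtor c hc1 hcm
  have hεui : u i + ε = u j := by
    rw [hu, hε]
    simp only
    rw [← add_mul]
    congr 1
    have hji : (j : ℕ) = (i : ℕ) + c := by omega
    rw [hji]
    push_cast
    ring
  have hxicast : ∀ i', (((xin i' : ℕ) : ℤ) : ZMod d) = u i' := by
    intro i'
    rw [hxin]
    push_cast
    simp [ZMod.natCast_val, ZMod.cast_id]
  -- the one-step relation
  set Δ : ZMod (m * d) := ((((xin j : ℕ) : ℤ) - ((xin i : ℕ) : ℤ)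
      + (d : ℤ) * (((P.out k (xin i) μ : ℕ) : ℤ) - ((P.out k (xin j) μ : ℕ) : ℤ)) : ℤ)
      : ZMod (m * d)) with hΔ
  have hrel : ∀ r ∈ R, Lam (r + ε) = Lam r + Δ := by
    intro r hr
    have hrε : r + ε ∈ R := by
      have := hmem c r hr
      rwa [← hε] at this
    have hA1 := hW1 (r + ε) hrε
    have hA2 := hW2 (r + ε) hrε
    have hB1 := hW1 r hr
    have hB2 := hW2 r hr
    have hkey := key P hd hS (k := k+1) (by omega)
      (X := Function.update (W (r + ε)) k (xin i))
      (X' := Function.update (W r) k (xin j)) ?hrun ?hsum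
    case hrun =>
      rw [update_run, update_run, hA1, hB1]
      exact hνij
    case hsum =>
      rw [update_Sv, update_Sv]
      push_cast
      rw [hA2, hB2]
      have h1 := hxicast i
      have h2 := hxicast j
      push_cast at h1 h2
      rw [h1, h2, ← hεui]
      ring
    rw [update_Sv, update_Sv, update_Tv, update_Tv, hA1, hB1] at hkey
    simp only [hLam, hΔ]
    push_cast at hkey ⊢
    linear_combination hkey
  -- telescoping
  obtain ⟨r₀, hr₀⟩ := hRne
  have htel : ∀ l : ℕ, (r₀ + ((l * c : ℕ) : ZMod d) * δ ∈ R) ∧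
      Lam (r₀ + ((l * c : ℕ) : ZMod d) * δ) = Lam r₀ + l • Δ := by
    intro l
    induction l with
    | zero => simp [hr₀]
    | succ l ih =>
        have hmem' : r₀ + ((l * c : ℕ) : ZMod d) * δ ∈ R := ih.1
        have hstep := hrel _ hmem'
        have heq : r₀ + ((l * c : ℕ) : ZMod d) * δ + ε
            = r₀ + (((l+1) * c : ℕ) : ZMod d) * δ := by
          rw [hε]
          push_cast
          ring
        constructor
        · rw [← heq]
          have hmm2 := hmem c _ hmem'
          rwa [← hε] at hmm2
        · rw [← heq, hstep, ih.2, succ_nsmul]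
          ring
  -- the closing length L
  set gg := Nat.gcd (ε.val) d with hgg
  have hg0 : 0 < gg := Nat.gcd_pos_of_pos_right _ hd
  obtain ⟨q, hq⟩ : gg ∣ ε.val := Nat.gcd_dvd_left _ _
  obtain ⟨L, hLd⟩ : gg ∣ d := Nat.gcd_dvd_right _ _
  have hL0 : 0 < L := by
    rcases Nat.eq_zero_or_pos L with h | h
    · rw [h, mul_zero] at hLd; omega
    · exact h
  have hLε : ((L : ℕ) : ZMod d) * ε = 0 := by
    have h1 : ((L : ℕ) : ZMod d) * ε = ((L * ε.val : ℕ) : ZMod d) := by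
      push_cast
      rw [ZMod.natCast_val, ZMod.cast_id]
    rw [h1]
    have h2 : L * ε.val = d * q := by
      rw [hq, hLd]; ring
    rw [h2]
    push_cast
    rw [ZMod.natCast_self]
    ring
  have hLΔ : L • Δ = 0 := by
    have h1 := (htel L).2
    have h2 : ((L * c : ℕ) : ZMod d) * δ = ((L : ℕ) : ZMod d) * ε := by
      rw [hε]
      push_cast
      ring
    rw [h2, hLε, add_zero] at h1
    exact left_eq_add.mp h1
  -- extract integer divisibility
  set e : ℤ := ((xin j : ℕ) : ℤ) - ((xin i : ℕ) : ℤ) with he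
  set z : ℤ := ((P.out k (xin i) μ : ℕ) : ℤ) - ((P.out k (xin j) μ : ℕ) : ℤ) with hz
  have hdvdmd : ((m * d : ℕ) : ℤ) ∣ (L : ℤ) * (e + d * z) := by
    have hcast : (((L : ℤ) * (e + d * z) : ℤ) : ZMod (m*d)) = L • Δ := by
      rw [hΔ, he, hz, nsmul_eq_mul]
      push_cast
      ring
    rw [← ZMod.intCast_zmod_eq_zero_iff_dvd, hcast, hLΔ]
  have hee : (d : ℤ) ∣ e - (ε.val : ℤ) := by
    rw [← ZMod.intCast_zmod_eq_zero_iff_dvd]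
    have h1 := hxicast i
    have h2 := hxicast j
    have h3 : ((ε.val : ℕ) : ZMod d) = ε := by
      simp [ZMod.natCast_val, ZMod.cast_id]
    push_cast at h1 h2 h3 ⊢
    rw [he]
    push_cast
    rw [h1, h2, h3]
    rw [← hεui]
    ring
  obtain ⟨w, hw⟩ := hee
  -- L is even, q is odd
  have hLdvd : L ∣ d := ⟨gg, by rw [hLd]; ring⟩
  obtain ⟨t, htle, hLt⟩ := (Nat.dvd_prime_pow Nat.prime_two).mp (hds ▸ hLdvd)
  have hεvlt : ε.val < d := ZMod.val_lt ε
  have hεv0 : ε.val ≠ 0 := by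
    intro h
    apply hε0
    have h3 : ((ε.val : ℕ) : ZMod d) = ε := by
      simp [ZMod.natCast_val, ZMod.cast_id]
    rw [h] at h3
    simpa using h3.symm
  have ht1 : 1 ≤ t := by
    by_contra hcon
    have ht0 : t = 0 := by omega
    rw [ht0, pow_zero] at hLt
    rw [hLt, mul_one] at hLd
    rcases Nat.eq_zero_or_pos q with hq0 | hq0
    · rw [hq0, mul_zero] at hq
      exact hεv0 hq
    · have hge : d ≤ ε.val := by
        rw [hq, hLd]
        exact Nat.le_mul_of_pos_right _ hq0
      omega
  have hLeven : 2 ∣ L := by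
    rw [hLt]
    exact dvd_pow_self 2 (by omega)
  have hqodd : ¬ 2 ∣ q := by
    rintro ⟨q', hq'⟩
    obtain ⟨L2, hL2⟩ := hLeven
    have h2g_ev : 2 * gg ∣ ε.val := ⟨q', by rw [hq, hq']; ring⟩
    have h2g_d : 2 * gg ∣ d := ⟨L2, by rw [hLd, hL2]; ring⟩
    have hdg : 2 * gg ∣ gg := Nat.dvd_gcd h2g_ev h2g_d
    have := Nat.le_of_dvd hg0 hdg
    omega
  -- final divisibility
  have hgq : (gg : ℤ) * q = (ε.val : ℤ) := by exact_mod_cast hq.symm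
  have hgL : (gg : ℤ) * L = (d : ℤ) := by exact_mod_cast hLd.symm
  have hLe : (L : ℤ) * (e + d * z) = (d : ℤ) * ((q : ℤ) + L * (w + z)) := by
    have hew : e = (ε.val : ℤ) + d * w := by linarith
    rw [hew]
    linear_combination (-(L : ℤ)) * hgq + (q : ℤ) * hgL
  have hfin : (m : ℤ) ∣ (q : ℤ) + L * (w + z) := by
    obtain ⟨v, hv⟩ := hdvdmd
    rw [hLe] at hv
    push_cast at hv
    refine ⟨v, mul_left_cancel₀ (by exact_mod_cast hd.ne' : (d : ℤ) ≠ 0) ?_⟩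
    rw [hv]; ring
  obtain ⟨mh, hmh⟩ := hmeven
  obtain ⟨QQ, hQQ⟩ := hfin
  have h2q : (2 : ℤ) ∣ (q : ℤ) := by
    obtain ⟨L2, hL2⟩ := hLeven
    refine ⟨mh * QQ - L2 * (w + z), ?_⟩
    have hmz : (m : ℤ) = mh + mh := by exact_mod_cast hmh
    have hLz : (L : ℤ) = 2 * L2 := by exact_mod_cast hL2
    rw [hmz] at hQQ
    rw [hLz] at hQQ
    linarith
  have : (2 : ℕ) ∣ q := by exact_mod_cast h2q
  exact hqodd this

end NoHolevoAux

/-- **Non-classicality of temporal GHZ correlations.**  Let `m ≥ 2` be even and let `d` be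
a power of two with `m² < d ≤ 2m²`.  Then for every `n ≥ 2m³` there is no deterministic
sequential protocol, all of whose message alphabets `M_1, …, M_{n-1}` have size at most `m`
(i.e. each message carries at most `log₂ m` bits, the Holevo bound of an `m`-level system),
that solves the sequential `n`-point modulo-`(m,d)` problem with certainty. -/


theorem no_holevo_bounded_classical_simulation
    {m d n : ℕ} (hm2 : 2 ≤ m) (hmeven : Even m)
    (hdpow : ∃ s : ℕ, d = 2 ^ s) (hdl : m ^ 2 < d) (hdu : d ≤ 2 * m ^ 2)
    (hn : 2 * m ^ 3 ≤ n) :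
    ¬ ∃ P : SeqProtocol n m d,
        (∀ k ∈ Finset.Icc 1 (n - 1), (@Fintype.card (P.Msg k) (P.msgFintype k)) ≤ m) ∧
        P.Solves := by
  rintro ⟨P, hcard, hS⟩
  obtain ⟨s, hds⟩ := hdpow
  have hmm : m * m < d := by
    have h := hdl
    rw [pow_two] at h
    exact h
  have hd : 0 < d := by
    have h4 : 4 ≤ m * m := Nat.mul_le_mul hm2 hm2
    omega
  haveI : NeZero d := ⟨by omega⟩
  have hdn : d + 3 ≤ n := by
    have e1 : m ^ 3 = m ^ 2 * m := by ring
    have e2 : 2 * m ^ 2 * 2 ≤ 2 * (m ^ 2 * m) := by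
      have := Nat.mul_le_mul_left (2 * m ^ 2) hm2
      calc 2 * m ^ 2 * 2 ≤ 2 * m ^ 2 * m := Nat.mul_le_mul_left _ hm2
        _ = 2 * (m ^ 2 * m) := by ring
    have e3 : 4 ≤ m ^ 2 := by
      rw [pow_two]
      exact Nat.mul_le_mul hm2 hm2
    have e4 : 2 * m ^ 3 = 2 * (m ^ 2 * m) := by rw [e1]
    -- d ≤ 2m², n ≥ 2m³ = 2(m²·m) ≥ 2m²·2 = 2·2m² ≥ d + 2m² ≥ d + 8
    have e5 : d + 2 * m ^ 2 ≤ 2 * m ^ 2 + 2 * m ^ 2 := by omega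
    have e6 : 2 * m ^ 2 + 2 * m ^ 2 = 2 * m ^ 2 * 2 := by ring
    omega
  have hn' : d + 2 ≤ n - 1 := by omega
  obtain ⟨k, μ, R, hk1, hk2, hR, hRne, hstab⟩ := NoHolevoAux.exists_stag P hmm hcard hn'
  have hmd : m < d := by
    have : m ≤ m * m := Nat.le_mul_of_pos_left m (by omega)
    omega
  exact NoHolevoAux.phase2 P hS hm2 hmeven hds hmd hk2 (by omega)
    (hcard (k+1) (Finset.mem_Icc.mpr ⟨by omega, hk2⟩)) hR hRne hstab
end

section
/- Let ρ be any 2×2 complex matrix that is Hermitian, positive semidefinite, and has trace 1 (a qubit density matrix). Let a = (a₁,a₂,a₃) and b = (b₁,b₂,b₃) be unit vectors in ℝ³, and for a unit vector v let v·σ = v₁σ₁ + v₂σ₂ + v₃σ₃ and P^v_ε = (I + ε·(v·σ))/2 for ε ∈ {+1,−1}. Then the two-time temporal correlation function of sequential projective measurements along a and then b satisfies ∑_{α∈{±1}} ∑_{β∈{±1}} α·β · Tr( P^b_β · P^a_α · ρ · P^a_α ) = a₁b₁ + a₂b₂ + a₃b₃, i.e., it equals the Euclidean dot product a·b, independently of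 the initial state ρ. -/
set_option maxHeartbeats 1000000

open Matrix
open scoped ComplexOrder

/-- The Pauli matrix σ₁. -/
noncomputable def pauli1 : Matrix (Fin 2) (Fin 2) ℂ := !![0, 1; 1, 0]

/-- The Pauli matrix σ₂. -/
noncomputable def pauli2 : Matrix (Fin 2) (Fin 2) ℂ := !![0, -Complex.I; Complex.I, 0]

/-- The Pauli matrix σ₃. -/
noncomputable def pauli3 : Matrix (Fin 2) (Fin 2) ℂ := !![1, 0; 0, -1]

/-- `v·σ = v₁σ₁ + v₂σ₂ + v₃σ₃` for a real vector `v ∈ ℝ³`. -/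
noncomputable def dotPauli (v : Fin 3 → ℝ) : Matrix (Fin 2) (Fin 2) ℂ :=
  (v 0 : ℂ) • pauli1 + (v 1 : ℂ) • pauli2 + (v 2 : ℂ) • pauli3

/-- The projector `P^v_ε = (I + ε·(v·σ))/2` onto the `ε`-eigenspace of `v·σ`. -/
noncomputable def projMeas (v : Fin 3 → ℝ) (ε : ℤ) : Matrix (Fin 2) (Fin 2) ℂ :=
  (2⁻¹ : ℂ) • ((1 : Matrix (Fin 2) (Fin 2) ℂ) + (ε : ℂ) • dotPauli v)

lemma projMeas_eq (v : Fin 3 → ℝ) (ε : ℤ) :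
    projMeas v ε = !![((1 : ℂ) + (ε : ℂ) * (v 2 : ℝ)) / 2, ((ε : ℂ) * (v 0 : ℝ) - (ε : ℂ) * (v 1 : ℝ) * Complex.I) / 2;
      ((ε : ℂ) * (v 0 : ℝ) + (ε : ℂ) * (v 1 : ℝ) * Complex.I) / 2, ((1 : ℂ) - (ε : ℂ) * (v 2 : ℝ)) / 2] := by
  unfold projMeas dotPauli pauli1 pauli2 pauli3
  ext i j
  fin_cases i <;> fin_cases j <;>
    simp [Matrix.one_apply] <;> ring

lemma key (a b : Fin 3 → ℝ) :
    ∑ α ∈ ({-1, 1} : Finset ℤ), ∑ β ∈ ({-1, 1} : Finset ℤ),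
        ((α : ℂ) * (β : ℂ)) • (projMeas a α * projMeas b β * projMeas a α)
      = ((a 0 * b 0 + a 1 * b 1 + a 2 * b 2 : ℝ) : ℂ) • (1 : Matrix (Fin 2) (Fin 2) ℂ) := by
  simp only [Finset.sum_insert (by decide : (-1:ℤ) ∉ ({1} : Finset ℤ)),
    Finset.sum_singleton, projMeas_eq, Matrix.mul_fin_two]
  ext i j
  fin_cases i <;> fin_cases j <;>
    (simp only [Matrix.smul_apply, Matrix.add_apply, Matrix.one_apply,
        Matrix.cons_val', Matrix.cons_val_zero, Matrix.cons_val_one, Matrix.head_cons,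
        Matrix.head_fin_const, Matrix.empty_val', Matrix.cons_val_fin_one, smul_eq_mul,
        Fin.isValue, if_true, if_false, reduceCtorEq, Fin.zero_eta, Fin.mk_one];
      norm_num;
      ring_nf;
      (try simp only [Complex.I_sq]);
      (try ring))

/-- **Two-time temporal correlations of a qubit.**  For any qubit density matrix `ρ`
(Hermitian, positive semidefinite, trace 1) and unit vectors `a, b ∈ ℝ³`, the temporal
correlation function of sequential projective (Lüders) measurements along `a` and then `b`,
`∑_{α,β=±1} α β Tr(P^b_β P^a_α ρ P^a_α)`, equals the Euclidean dot product `a·b`,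
independently of `ρ`. -/
theorem temporal_correlation_two_point
    (ρ : Matrix (Fin 2) (Fin 2) ℂ) (hherm : ρ.IsHermitian) (hpos : ρ.PosSemidef)
    (htr : ρ.trace = 1)
    (a b : Fin 3 → ℝ) (ha : a 0 ^ 2 + a 1 ^ 2 + a 2 ^ 2 = 1)
    (hb : b 0 ^ 2 + b 1 ^ 2 + b 2 ^ 2 = 1) :
    ∑ α ∈ ({-1, 1} : Finset ℤ), ∑ β ∈ ({-1, 1} : Finset ℤ),
        (α : ℂ) * (β : ℂ) * (projMeas b β * projMeas a α * ρ * projMeas a α).trace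
      = ((a 0 * b 0 + a 1 * b 1 + a 2 * b 2 : ℝ) : ℂ) := by
  have step : ∀ (α β : ℤ),
      (α : ℂ) * (β : ℂ) * (projMeas b β * projMeas a α * ρ * projMeas a α).trace
        = (((α : ℂ) * (β : ℂ)) • (projMeas a α * projMeas b β * projMeas a α) * ρ).trace := by
    intro α β
    rw [Matrix.smul_mul, Matrix.trace_smul, smul_eq_mul]
    congr 1
    rw [Matrix.trace_mul_cycle, ← mul_assoc]
  calc ∑ α ∈ ({-1, 1} : Finset ℤ), ∑ β ∈ ({-1, 1} : Finset ℤ),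
        (α : ℂ) * (β : ℂ) * (projMeas b β * projMeas a α * ρ * projMeas a α).trace
      = ((∑ α ∈ ({-1, 1} : Finset ℤ), ∑ β ∈ ({-1, 1} : Finset ℤ),
          ((α : ℂ) * (β : ℂ)) • (projMeas a α * projMeas b β * projMeas a α)) * ρ).trace := by
        simp only [step, Matrix.sum_mul, Matrix.trace_sum]
    _ = ((a 0 * b 0 + a 1 * b 1 + a 2 * b 2 : ℝ) : ℂ) := by
        rw [key, Matrix.smul_mul, Matrix.one_mul, Matrix.trace_smul, htr, smul_eq_mul, mul_one]
end

section
/- Let ρ be any 2×2 complex matrix that is Hermitian, positive semidefinite, and has trace 1. Let a⁽¹⁾, a⁽²⁾, a⁽³⁾, a⁽⁴⁾ be unit vectors in ℝ³ and write P^k_ε = (I + ε·(a⁽ᵏ⁾·σ))/2 for ε ∈ {+1,−1}. Then the four-time temporal correlation function of the sequential projective measurements along a⁽¹⁾, a⁽²⁾, a⁽³⁾, a⁽⁴⁾ factors into dot products of consecutive pairs: ∑_{α₁,α₂,α₃,α₄ ∈ {±1}} α₁α₂α₃α₄ · Tr( P⁴_{α₄} P³_{α₃} P²_{α₂} P¹_{α₁}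 ρ P¹_{α₁} P²_{α₂} P³_{α₃} P⁴_{α₄} ) = (a⁽¹⁾·a⁽²⁾)(a⁽³⁾·a⁽⁴⁾), independently of the initial state ρ. -/
open Matrix
open scoped ComplexOrder

/-- Anticommutation relation `{v·σ, w·σ} = 2 (v·w) I`. -/
lemma dotPauli_anticomm (v w : Fin 3 → ℝ) :
    dotPauli v * dotPauli w + dotPauli w * dotPauli v
      = ((2 * (v 0 * w 0 + v 1 * w 1 + v 2 * w 2) : ℝ) : ℂ) • (1 : Matrix (Fin 2) (Fin 2) ℂ) := by
  ext i j
  fin_cases i <;> fin_cases j <;>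
    simp [dotPauli, pauli1, pauli2, pauli3, Matrix.mul_apply, Fin.sum_univ_succ,
      Matrix.one_apply] <;> ring_nf <;> simp [Complex.I_sq] <;> ring

/-- Signed Lüders sum: `∑ₐ α Pₐ X Pₐ = ((v·σ) X + X (v·σ))/2`. -/
lemma sum_sign_proj (v : Fin 3 → ℝ) (Y : Matrix (Fin 2) (Fin 2) ℂ) :
    ∑ α ∈ ({-1, 1} : Finset ℤ), (α : ℂ) • (projMeas v α * (Y * projMeas v α))
      = (2⁻¹ : ℂ) • (dotPauli v * Y + Y * dotPauli v) := by
  rw [Finset.sum_pair (by norm_num : (-1 : ℤ) ≠ 1)]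
  simp only [projMeas, Int.cast_neg, Int.cast_one, neg_smul, one_smul]
  simp only [Matrix.smul_mul, Matrix.mul_smul, smul_smul, add_mul, mul_add,
    one_mul, mul_one, smul_add, neg_smul, one_smul, smul_neg, mul_neg, neg_mul, neg_add, neg_neg]
  module

/-- `∑ₐ α Tr(Pₐ X Pₐ) = Tr((v·σ) X)`. -/
lemma traceL (v : Fin 3 → ℝ) (X : Matrix (Fin 2) (Fin 2) ℂ) :
    ∑ α ∈ ({-1, 1} : Finset ℤ), (α : ℂ) * (projMeas v α * (X * projMeas v α)).trace
      = (dotPauli v * X).trace := by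
  have h := congrArg Matrix.trace (sum_sign_proj v X)
  simp only [Matrix.trace_sum, Matrix.trace_smul, Matrix.trace_add, smul_eq_mul] at h
  rw [Matrix.trace_mul_comm X (dotPauli v)] at h
  rw [h]; ring

/-- `∑ₐ α Tr((w·σ) Pₐ Y Pₐ) = (v·w) Tr(Y)`. -/
lemma traceM (w v : Fin 3 → ℝ) (Y : Matrix (Fin 2) (Fin 2) ℂ) :
    ∑ α ∈ ({-1, 1} : Finset ℤ),
        (α : ℂ) * (dotPauli w * (projMeas v α * (Y * projMeas v α))).trace
      = ((v 0 * w 0 + v 1 * w 1 + v 2 * w 2 : ℝ) : ℂ) * Y.trace := by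
  have h : ∑ α ∈ ({-1, 1} : Finset ℤ),
      (α : ℂ) • (dotPauli w * (projMeas v α * (Y * projMeas v α)))
      = dotPauli w * ((2⁻¹ : ℂ) • (dotPauli v * Y + Y * dotPauli v)) := by
    rw [← sum_sign_proj v Y, Finset.mul_sum]
    exact Finset.sum_congr rfl fun α _ => (Matrix.mul_smul _ _ _).symm
  have h2 := congrArg Matrix.trace h
  simp only [Matrix.trace_sum, Matrix.trace_smul, smul_eq_mul] at h2
  rw [h2, Matrix.mul_smul, Matrix.trace_smul, mul_add, Matrix.trace_add, smul_eq_mul,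
    show dotPauli w * (Y * dotPauli v) = dotPauli w * Y * dotPauli v from (mul_assoc _ _ _).symm,
    Matrix.trace_mul_comm (dotPauli w * Y) (dotPauli v)]
  simp only [← mul_assoc]
  rw [← Matrix.trace_add, ← Matrix.add_mul, dotPauli_anticomm w v,
    Matrix.smul_mul, Matrix.trace_smul, one_mul, smul_eq_mul]
  push_cast
  ring

/-- **Four-time temporal correlations of a qubit factorize.**  For any qubit density
matrix `ρ` and unit vectors `a⁽¹⁾, a⁽²⁾, a⁽³⁾, a⁽⁴⁾ ∈ ℝ³`, the temporal correlation
function of four sequential projective (Lüders) measurements,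
`∑_{α₁α₂α₃α₄=±1} α₁α₂α₃α₄ Tr(P⁴_{α₄}P³_{α₃}P²_{α₂}P¹_{α₁} ρ P¹_{α₁}P²_{α₂}P³_{α₃}P⁴_{α₄})`,
equals `(a⁽¹⁾·a⁽²⁾)(a⁽³⁾·a⁽⁴⁾)`, independently of `ρ`. -/
theorem temporal_correlation_four_point
    (ρ : Matrix (Fin 2) (Fin 2) ℂ) (hherm : ρ.IsHermitian) (hpos : ρ.PosSemidef)
    (htr : ρ.trace = 1)
    (a1 a2 a3 a4 : Fin 3 → ℝ)
    (ha1 : a1 0 ^ 2 + a1 1 ^ 2 + a1 2 ^ 2 = 1)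
    (ha2 : a2 0 ^ 2 + a2 1 ^ 2 + a2 2 ^ 2 = 1)
    (ha3 : a3 0 ^ 2 + a3 1 ^ 2 + a3 2 ^ 2 = 1)
    (ha4 : a4 0 ^ 2 + a4 1 ^ 2 + a4 2 ^ 2 = 1) :
    ∑ α1 ∈ ({-1, 1} : Finset ℤ), ∑ α2 ∈ ({-1, 1} : Finset ℤ),
      ∑ α3 ∈ ({-1, 1} : Finset ℤ), ∑ α4 ∈ ({-1, 1} : Finset ℤ),
        (α1 : ℂ) * (α2 : ℂ) * (α3 : ℂ) * (α4 : ℂ) *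
          (projMeas a4 α4 * projMeas a3 α3 * projMeas a2 α2 * projMeas a1 α1 * ρ *
            projMeas a1 α1 * projMeas a2 α2 * projMeas a3 α3 * projMeas a4 α4).trace
      = (((a1 0 * a2 0 + a1 1 * a2 1 + a1 2 * a2 2) *
          (a3 0 * a4 0 + a3 1 * a4 1 + a3 2 * a4 2) : ℝ) : ℂ) := by
  have step4 : ∀ α1 α2 α3 : ℤ,
      ∑ α4 ∈ ({-1, 1} : Finset ℤ),
        (α1 : ℂ) * (α2 : ℂ) * (α3 : ℂ) * (α4 : ℂ) *
          (projMeas a4 α4 * projMeas a3 α3 * projMeas a2 α2 * projMeas a1 α1 * ρ *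
            projMeas a1 α1 * projMeas a2 α2 * projMeas a3 α3 * projMeas a4 α4).trace
      = (α1 : ℂ) * (α2 : ℂ) * (α3 : ℂ) *
          (dotPauli a4 * (projMeas a3 α3 * (projMeas a2 α2 * (projMeas a1 α1 *
            (ρ * (projMeas a1 α1 * (projMeas a2 α2 * projMeas a3 α3))))))).trace := by
    intro α1 α2 α3
    rw [← traceL a4, Finset.mul_sum]
    refine Finset.sum_congr rfl fun α4 _ => ?_
    rw [show projMeas a4 α4 * projMeas a3 α3 * projMeas a2 α2 * projMeas a1 α1 * ρ *
          projMeas a1 α1 * projMeas a2 α2 * projMeas a3 α3 * projMeas a4 α4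
        = projMeas a4 α4 * ((projMeas a3 α3 * (projMeas a2 α2 * (projMeas a1 α1 *
            (ρ * (projMeas a1 α1 * (projMeas a2 α2 * projMeas a3 α3)))))) * projMeas a4 α4) by
      simp only [mul_assoc]]
    ring
  have step3 : ∀ α1 α2 : ℤ,
      ∑ α3 ∈ ({-1, 1} : Finset ℤ), (α1 : ℂ) * (α2 : ℂ) * (α3 : ℂ) *
          (dotPauli a4 * (projMeas a3 α3 * (projMeas a2 α2 * (projMeas a1 α1 *
            (ρ * (projMeas a1 α1 * (projMeas a2 α2 * projMeas a3 α3))))))).trace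
      = (α1 : ℂ) * (α2 : ℂ) * (((a3 0 * a4 0 + a3 1 * a4 1 + a3 2 * a4 2 : ℝ) : ℂ) *
          (projMeas a2 α2 * (projMeas a1 α1 * (ρ * (projMeas a1 α1 * projMeas a2 α2)))).trace) := by
    intro α1 α2
    rw [← traceM a4 a3, Finset.mul_sum]
    refine Finset.sum_congr rfl fun α3 _ => ?_
    rw [show projMeas a3 α3 * (projMeas a2 α2 * (projMeas a1 α1 *
          (ρ * (projMeas a1 α1 * (projMeas a2 α2 * projMeas a3 α3)))))
        = projMeas a3 α3 * ((projMeas a2 α2 * (projMeas a1 α1 * (ρ *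
            (projMeas a1 α1 * projMeas a2 α2)))) * projMeas a3 α3) by
      simp only [mul_assoc]]
    ring
  have step2 : ∀ α1 : ℤ,
      ∑ α2 ∈ ({-1, 1} : Finset ℤ), (α1 : ℂ) * (α2 : ℂ) *
          (projMeas a2 α2 * (projMeas a1 α1 * (ρ * (projMeas a1 α1 * projMeas a2 α2)))).trace
      = (α1 : ℂ) *
          (dotPauli a2 * (projMeas a1 α1 * (ρ * projMeas a1 α1))).trace := by
    intro α1
    rw [← traceL a2, Finset.mul_sum]
    refine Finset.sum_congr rfl fun α2 _ => ?_
    rw [show projMeas a2 α2 * (projMeas a1 α1 * (ρ * (projMeas a1 α1 * projMeas a2 α2)))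
        = projMeas a2 α2 * ((projMeas a1 α1 * (ρ * projMeas a1 α1)) * projMeas a2 α2) by
      simp only [mul_assoc]]
    ring
  have step1 :
      ∑ α1 ∈ ({-1, 1} : Finset ℤ), (α1 : ℂ) *
          (dotPauli a2 * (projMeas a1 α1 * (ρ * projMeas a1 α1))).trace
      = ((a1 0 * a2 0 + a1 1 * a2 1 + a1 2 * a2 2 : ℝ) : ℂ) * ρ.trace :=
    traceM a2 a1 ρ
  calc
    ∑ α1 ∈ ({-1, 1} : Finset ℤ), ∑ α2 ∈ ({-1, 1} : Finset ℤ),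
      ∑ α3 ∈ ({-1, 1} : Finset ℤ), ∑ α4 ∈ ({-1, 1} : Finset ℤ),
        (α1 : ℂ) * (α2 : ℂ) * (α3 : ℂ) * (α4 : ℂ) *
          (projMeas a4 α4 * projMeas a3 α3 * projMeas a2 α2 * projMeas a1 α1 * ρ *
            projMeas a1 α1 * projMeas a2 α2 * projMeas a3 α3 * projMeas a4 α4).trace
      = ∑ α1 ∈ ({-1, 1} : Finset ℤ), ∑ α2 ∈ ({-1, 1} : Finset ℤ),
          (α1 : ℂ) * (α2 : ℂ) * (((a3 0 * a4 0 + a3 1 * a4 1 + a3 2 * a4 2 : ℝ) : ℂ) *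
            (projMeas a2 α2 * (projMeas a1 α1 * (ρ * (projMeas a1 α1 * projMeas a2 α2)))).trace) := by
        refine Finset.sum_congr rfl fun α1 _ => Finset.sum_congr rfl fun α2 _ => ?_
        rw [← step3 α1 α2]
        exact Finset.sum_congr rfl fun α3 _ => step4 α1 α2 α3
    _ = (((a3 0 * a4 0 + a3 1 * a4 1 + a3 2 * a4 2 : ℝ) : ℂ)) *
          ∑ α1 ∈ ({-1, 1} : Finset ℤ), ∑ α2 ∈ ({-1, 1} : Finset ℤ),
            (α1 : ℂ) * (α2 : ℂ) *
              (projMeas a2 α2 * (projMeas a1 α1 * (ρ * (projMeas a1 α1 * projMeas a2 α2)))).trace := by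
        rw [Finset.mul_sum]
        refine Finset.sum_congr rfl fun α1 _ => ?_
        rw [Finset.mul_sum]
        exact Finset.sum_congr rfl fun α2 _ => by ring
    _ = (((a3 0 * a4 0 + a3 1 * a4 1 + a3 2 * a4 2 : ℝ) : ℂ)) *
          (((a1 0 * a2 0 + a1 1 * a2 1 + a1 2 * a2 2 : ℝ) : ℂ) * ρ.trace) := by
        rw [← step1]
        congr 1
        exact Finset.sum_congr rfl fun α1 _ => step2 α1
    _ = (((a1 0 * a2 0 + a1 1 * a2 1 + a1 2 * a2 2) *
          (a3 0 * a4 0 + a3 1 * a4 1 + a3 2 * a4 2) : ℝ) : ℂ) := by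
        rw [htr]; push_cast; ring
end

section
/- Let m be an even positive integer, let d = 2^s for some integer s ≥ 1, and let Δ be an integer with 1 ≤ Δ ≤ m·d − 1. Then there exists a positive integer t such that t·Δ ≡ 0 (mod d) and t·Δ ≢ 0 (mod m·d). -/
/-- Key step of the subset-sum lemma: if `m` is an even positive integer, `d = 2^s`
with `s ≥ 1`, and `Δ` is an integer with `1 ≤ Δ ≤ m·d - 1`, then some positive
multiple of `Δ` is divisible by `d` but not by `m·d`. -/
theorem multiple_div_d_not_md
    {m d s : ℕ} (hm : 0 < m) (hmeven : Even m) (hs : 1 ≤ s) (hd : d = 2 ^ s)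
    (Δ : ℤ) (h1 : 1 ≤ Δ) (h2 : Δ ≤ (m : ℤ) * d - 1) :
    ∃ t : ℕ, 0 < t ∧ (d : ℤ) ∣ (t : ℤ) * Δ ∧ ¬ ((m : ℤ) * d ∣ (t : ℤ) * Δ) := by
  have hdpos : 0 < d := by rw [hd]; positivity
  set M : ℤ := (m : ℤ) * d with hM
  have hMpos : 0 < M := by positivity
  have hMnat : M = ((m * d : ℕ) : ℤ) := by push_cast; ring
  set g : ℕ := Int.gcd Δ M with hg
  have hΔne : Δ ≠ 0 := by omega
  have hgpos : 0 < g := Int.gcd_pos_of_ne_zero_left M hΔne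
  have hgdvdΔ : (g : ℤ) ∣ Δ := Int.gcd_dvd_left Δ M
  have hgdvdM : (g : ℤ) ∣ M := Int.gcd_dvd_right Δ M
  have hgdvdmd : g ∣ m * d := by
    rw [← Int.natCast_dvd_natCast, ← hMnat]; exact hgdvdM
  set L : ℕ := Nat.lcm g d with hL
  have hgL : g ∣ L := Nat.dvd_lcm_left g d
  have hdL : d ∣ L := Nat.dvd_lcm_right g d
  have hLdvdmd : L ∣ m * d := Nat.lcm_dvd hgdvdmd ⟨m, Nat.mul_comm m d⟩
  have hLpos : 0 < L := Nat.pos_of_dvd_of_pos hLdvdmd (by positivity)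
  -- L ≠ m * d
  have hLne : L ≠ m * d := by
    intro heq
    set e : ℕ := Nat.gcd g d with he
    have hepos : 0 < e := Nat.gcd_pos_of_pos_left d hgpos
    have hmul : e * L = g * d := Nat.gcd_mul_lcm g d
    have hgeq : g = e * m := by
      have : e * (m * d) = g * d := by rw [← heq]; exact hmul
      have := Nat.eq_of_mul_eq_mul_right hdpos (by linarith [this] : e * m * d = g * d)
      omega
    have hedvd : e ∣ 2 ^ s := hd ▸ Nat.gcd_dvd_right g d
    obtain ⟨j, hjs, hej⟩ := (Nat.dvd_prime_pow Nat.prime_two).mp hedvd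
    rcases eq_or_lt_of_le hjs with hjeq | hjlt
    · -- e = d, so g = d * m = m*d, and g ∣ Δ forces Δ ≥ m*d
      have hge : g = m * d := by rw [hgeq, hej, hjeq, ← hd]; ring
      have : (g : ℤ) ≤ Δ := Int.le_of_dvd (by omega) hgdvdΔ
      rw [hge] at this
      push_cast at this
      omega
    · -- j < s : 2*e divides both g and d, contradicting e = gcd
      have h2ed : 2 * e ∣ d := by
        rw [hej, hd]
        have : (2 : ℕ) * 2 ^ j = 2 ^ (j + 1) := by ring
        rw [this]
        exact pow_dvd_pow 2 hjlt
      obtain ⟨k, hk⟩ := hmeven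
      have h2eg : 2 * e ∣ g := ⟨k, by rw [hgeq, hk]; ring⟩
      have : 2 * e ∣ e := Nat.dvd_gcd h2eg h2ed
      have := Nat.le_of_dvd hepos this
      omega
  have hLlt : L < m * d := lt_of_le_of_ne (Nat.le_of_dvd (by positivity) hLdvdmd) hLne
  -- Bezout
  have hbez : (g : ℤ) = Δ * Int.gcdA Δ M + M * Int.gcdB Δ M := Int.gcd_eq_gcd_ab Δ M
  obtain ⟨c, hc⟩ : (g : ℤ) ∣ (L : ℤ) := Int.natCast_dvd_natCast.mpr hgL
  set t0 : ℤ := c * Int.gcdA Δ M with ht0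
  have key : M ∣ t0 * Δ - L := by
    refine ⟨-c * Int.gcdB Δ M, ?_⟩
    rw [hc, hbez]; ring
  set t : ℕ := (t0 % M).toNat with ht
  have htz : (t : ℤ) = t0 % M := Int.toNat_of_nonneg (Int.emod_nonneg t0 hMpos.ne')
  have key2 : M ∣ (t : ℤ) * Δ - L := by
    have h1' : M ∣ (t : ℤ) - t0 := by
      rw [htz, Int.emod_def]; exact ⟨-(t0 / M), by ring⟩
    have := Int.dvd_add (Dvd.dvd.mul_right h1' Δ) key
    have heq : ((t : ℤ) - t0) * Δ + (t0 * Δ - L) = (t : ℤ) * Δ - L := by ring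
    rwa [heq] at this
  have hdM : (d : ℤ) ∣ M := ⟨(m : ℤ), mul_comm (m:ℤ) (d:ℤ)⟩
  have hdLz : (d : ℤ) ∣ (L : ℤ) := Int.natCast_dvd_natCast.mpr hdL
  have hnotMd : ¬ M ∣ (t : ℤ) * Δ := by
    intro hdvd
    have : M ∣ (L : ℤ) := by
      have := Int.dvd_sub hdvd key2
      simpa using this
    have := Int.le_of_dvd (by exact_mod_cast hLpos) this
    rw [hMnat] at this
    exact absurd (by exact_mod_cast this) (by omega : ¬ (m * d ≤ L))
  refine ⟨t, ?_, ?_, hnotMd⟩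
  · rcases Nat.eq_zero_or_pos t with h0 | h; · exfalso; apply hnotMd; rw [h0]; simp
    exact h
  · have : (d : ℤ) ∣ ((t : ℤ) * Δ - L) + L := Int.dvd_add (dvd_trans hdM key2) hdLz
    simpa using this
end
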